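/- arXiv:2208.01300 — 5 statements merged into one kernel-verified Lean document; each statement's English description precedes it below -/
import Mathlib

section
/- (IA 1994 Wald identification) Suppose Y = W·Y(1) + (1−W)·Y(0), W = Z·W(1) + (1−Z)·W(0), the vector (Y(0),Y(1),W(0),W(1)) is independent of Z, P[W(1) ≥ W(0)] = 1, P[W(1) > W(0)] > 0, and 0 < P(Z=1) < 1. Then E[Y(1) − Y(0) | W(1) > W(0)] = (E[Y|Z=1] − E[Y|Z=0]) / (E[W|Z=1] − E[W|Z=0]), and the denominator E[W|Z=1] − E[W|Z=0] = P[W(1) > W(0)] > 0. -/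
open MeasureTheory ProbabilityTheory

private lemma integral_cond_aux {Ω : Type*} [MeasurableSpace Ω] (μ : Measure Ω) (s : Set Ω)
    (f : Ω → ℝ) : ∫ ω, f ω ∂μ[|s] = (μ s).toReal⁻¹ * ∫ ω in s, f ω ∂μ := by
  rw [ProbabilityTheory.cond, integral_smul_measure, ENNReal.toReal_inv, smul_eq_mul]

/-- (Imbens–Angrist 1994 Wald identification.) Under independence of the potential
outcomes/treatments and the instrument, monotonicity, existence of compliers, and
`0 < P(Z=1) < 1`, the LATE equals the Wald ratio, and the Wald denominator equals
`P[W(1) > W(0)] > 0`. -/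
theorem wald_identification_of_LATE
    {Ω : Type*} [MeasurableSpace Ω] (μ : Measure Ω) [IsProbabilityMeasure μ]
    (Y0 Y1 W0 W1 Z : Ω → ℝ)
    (hY0m : Measurable Y0) (hY1m : Measurable Y1)
    (hW0m : Measurable W0) (hW1m : Measurable W1) (hZm : Measurable Z)
    (hY0 : Integrable Y0 μ) (hY1 : Integrable Y1 μ)
    (hW0b : ∀ ω, W0 ω = 0 ∨ W0 ω = 1) (hW1b : ∀ ω, W1 ω = 0 ∨ W1 ω = 1)
    (hZb : ∀ ω, Z ω = 0 ∨ Z ω = 1)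
    (W Y : Ω → ℝ)
    (hWdef : W = fun ω => Z ω * W1 ω + (1 - Z ω) * W0 ω)
    (hYdef : Y = fun ω => W ω * Y1 ω + (1 - W ω) * Y0 ω)
    (hindep : IndepFun (fun ω => (Y0 ω, Y1 ω, W0 ω, W1 ω)) Z μ)
    (hmono : ∀ᵐ ω ∂μ, W0 ω ≤ W1 ω)
    (hcomp : 0 < μ {ω | W0 ω < W1 ω})
    (hZ1 : 0 < μ {ω | Z ω = 1}) (hZ1' : μ {ω | Z ω = 1} < 1) :
    (∫ ω, (Y1 ω - Y0 ω) ∂μ[|{ω | W0 ω < W1 ω}]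
        = ((∫ ω, Y ω ∂μ[|{ω | Z ω = 1}]) - ∫ ω, Y ω ∂μ[|{ω | Z ω = 0}])
          / ((∫ ω, W ω ∂μ[|{ω | Z ω = 1}]) - ∫ ω, W ω ∂μ[|{ω | Z ω = 0}]))
    ∧ (∫ ω, W ω ∂μ[|{ω | Z ω = 1}]) - (∫ ω, W ω ∂μ[|{ω | Z ω = 0}])
        = (μ {ω | W0 ω < W1 ω}).toReal
    ∧ 0 < (μ {ω | W0 ω < W1 ω}).toReal := by
  classical
  set A : Set Ω := {ω | Z ω = 1} with hA_def
  set B : Set Ω := {ω | Z ω = 0} with hB_def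
  set C : Set Ω := {ω | W0 ω < W1 ω} with hC_def
  have hAmeas : MeasurableSet A := hZm (measurableSet_singleton 1)
  have hBmeas : MeasurableSet B := hZm (measurableSet_singleton 0)
  have hCmeas : MeasurableSet C := measurableSet_lt hW0m hW1m
  have hZ01 : ∀ ω, ‖Z ω‖ ≤ 1 := by
    intro ω; rcases hZb ω with h | h <;> simp [h]
  have hW1b' : ∀ ω, ‖W1 ω‖ ≤ 1 := by
    intro ω; rcases hW1b ω with h | h <;> simp [h]
  have hW0b' : ∀ ω, ‖W0 ω‖ ≤ 1 := by
    intro ω; rcases hW0b ω with h | h <;> simp [h]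
  have hW1b'' : ∀ ω, ‖1 - W1 ω‖ ≤ 1 := by
    intro ω; rcases hW1b ω with h | h <;> simp [h]
  have hW0b'' : ∀ ω, ‖1 - W0 ω‖ ≤ 1 := by
    intro ω; rcases hW0b ω with h | h <;> simp [h]
  -- set integrals over A and B as integrals against Z and 1 - Z
  have hindA : ∀ f : Ω → ℝ, ∫ ω in A, f ω ∂μ = ∫ ω, f ω * Z ω ∂μ := by
    intro f
    rw [← integral_indicator hAmeas]
    refine integral_congr_ae (Filter.Eventually.of_forall fun ω => ?_)
    by_cases h : Z ω = 1
    · simp [Set.indicator, hA_def, h]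
    · have h0 : Z ω = 0 := (hZb ω).resolve_right h
      simp [Set.indicator, hA_def, h, h0]
  have hindB : ∀ f : Ω → ℝ, ∫ ω in B, f ω ∂μ = ∫ ω, f ω * (1 - Z ω) ∂μ := by
    intro f
    rw [← integral_indicator hBmeas]
    refine integral_congr_ae (Filter.Eventually.of_forall fun ω => ?_)
    by_cases h : Z ω = 0
    · simp [Set.indicator, hB_def, h]
    · have h1 : Z ω = 1 := (hZb ω).resolve_left h
      simp [Set.indicator, hB_def, h, h1]
  -- expectation of Z
  have hEZ : ∫ ω, Z ω ∂μ = (μ A).toReal := by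
    have : ∀ ω, Z ω = A.indicator (fun _ => (1 : ℝ)) ω := by
      intro ω
      by_cases h : Z ω = 1
      · simp [Set.indicator, hA_def, h]
      · have h0 : Z ω = 0 := (hZb ω).resolve_right h
        simp [Set.indicator, hA_def, h, h0]
    rw [integral_congr_ae (Filter.Eventually.of_forall this), integral_indicator hAmeas]
    simp
    rfl
  -- key independence computation
  have key : ∀ f : Ω → ℝ, AEStronglyMeasurable f μ → IndepFun f Z μ →
      ∫ ω, f ω * Z ω ∂μ = (∫ ω, f ω ∂μ) * (μ A).toReal := by
    intro f hf hfind
    have h := hfind.integral_mul_eq_mul_integral hf hZm.aestronglyMeasurable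
    simpa [Pi.mul_apply, hEZ] using h
  have hμB : (μ B).toReal = 1 - (μ A).toReal := by
    have hBA : B = Aᶜ := by
      ext ω
      rcases hZb ω with h | h <;> simp [hA_def, hB_def, h]
    rw [hBA, measure_compl hAmeas (measure_ne_top μ _), measure_univ,
      ENNReal.toReal_sub_of_le (prob_le_one) ENNReal.one_ne_top, ENNReal.toReal_one]
  have keyB : ∀ f : Ω → ℝ, Integrable f μ → IndepFun f Z μ →
      ∫ ω, f ω * (1 - Z ω) ∂μ = (∫ ω, f ω ∂μ) * (μ B).toReal := by
    intro f hf hfind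
    have hfZ : Integrable (fun ω => f ω * Z ω) μ := by
      simpa [mul_comm] using hf.bdd_mul hZm.aestronglyMeasurable (Filter.Eventually.of_forall hZ01)
    have : ∀ ω, f ω * (1 - Z ω) = f ω - f ω * Z ω := by intro ω; ring
    rw [integral_congr_ae (Filter.Eventually.of_forall this), integral_sub hf hfZ,
      key f hf.aestronglyMeasurable hfind, hμB]
    ring
  -- the two "reduced-form" functions
  set f1 : Ω → ℝ := fun ω => W1 ω * Y1 ω + (1 - W1 ω) * Y0 ω with hf1_def
  set f0 : Ω → ℝ := fun ω => W0 ω * Y1 ω + (1 - W0 ω) * Y0 ω with hf0_def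
  have hf1int : Integrable f1 μ :=
    (hY1.bdd_mul hW1m.aestronglyMeasurable (Filter.Eventually.of_forall hW1b')).add
      (hY0.bdd_mul (measurable_const.sub hW1m).aestronglyMeasurable (Filter.Eventually.of_forall hW1b''))
  have hf0int : Integrable f0 μ :=
    (hY1.bdd_mul hW0m.aestronglyMeasurable (Filter.Eventually.of_forall hW0b')).add
      (hY0.bdd_mul (measurable_const.sub hW0m).aestronglyMeasurable (Filter.Eventually.of_forall hW0b''))
  -- independence of functions of the vector from Z
  have hcompfun : ∀ g : ℝ × ℝ × ℝ × ℝ → ℝ, Measurable g →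
      IndepFun (fun ω => g (Y0 ω, Y1 ω, W0 ω, W1 ω)) Z μ := by
    intro g hg
    exact hindep.comp hg measurable_id
  have hf1ind : IndepFun f1 Z μ :=
    hcompfun (fun p => p.2.2.2 * p.2.1 + (1 - p.2.2.2) * p.1) (by fun_prop)
  have hf0ind : IndepFun f0 Z μ :=
    hcompfun (fun p => p.2.2.1 * p.2.1 + (1 - p.2.2.1) * p.1) (by fun_prop)
  have hW1ind : IndepFun W1 Z μ := hcompfun (fun p => p.2.2.2) (by fun_prop)
  have hW0ind : IndepFun W0 Z μ := hcompfun (fun p => p.2.2.1) (by fun_prop)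
  -- pointwise identities
  have hYZ : ∀ ω, Y ω * Z ω = f1 ω * Z ω := by
    intro ω
    rcases hZb ω with h | h
    · simp [h]
    · simp only [hYdef, hWdef, hf1_def, h]; ring
  have hYZ' : ∀ ω, Y ω * (1 - Z ω) = f0 ω * (1 - Z ω) := by
    intro ω
    rcases hZb ω with h | h
    · simp only [hYdef, hWdef, hf0_def, h]; ring
    · simp [h]
  have hWZ : ∀ ω, W ω * Z ω = W1 ω * Z ω := by
    intro ω
    rcases hZb ω with h | h
    · simp [h]
    · simp only [hWdef, h]; ring
  have hWZ' : ∀ ω, W ω * (1 - Z ω) = W0 ω * (1 - Z ω) := by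
    intro ω
    rcases hZb ω with h | h
    · simp only [hWdef, h]; ring
    · simp [h]
  have hμA_pos : 0 < (μ A).toReal := ENNReal.toReal_pos hZ1.ne' (measure_ne_top μ _)
  have hμA_lt : (μ A).toReal < 1 := by
    have := (ENNReal.toReal_lt_toReal (measure_ne_top μ A) ENNReal.one_ne_top).2 hZ1'
    simpa using this
  have hμB_pos : 0 < (μ B).toReal := by rw [hμB]; linarith
  -- conditional expectations
  have EYA : ∫ ω, Y ω ∂μ[|A] = ∫ ω, f1 ω ∂μ := by
    rw [integral_cond_aux, hindA, integral_congr_ae (Filter.Eventually.of_forall hYZ),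
      key f1 hf1int.aestronglyMeasurable hf1ind]
    field_simp
  have EYB : ∫ ω, Y ω ∂μ[|B] = ∫ ω, f0 ω ∂μ := by
    rw [integral_cond_aux, hindB, integral_congr_ae (Filter.Eventually.of_forall hYZ'),
      keyB f0 hf0int hf0ind]
    field_simp
  have hW1int : Integrable W1 μ := by
    refine Integrable.mono' (integrable_const 1) hW1m.aestronglyMeasurable ?_
    exact Filter.Eventually.of_forall hW1b'
  have hW0int : Integrable W0 μ := by
    refine Integrable.mono' (integrable_const 1) hW0m.aestronglyMeasurable ?_
    exact Filter.Eventually.of_forall hW0b'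
  have EWA : ∫ ω, W ω ∂μ[|A] = ∫ ω, W1 ω ∂μ := by
    rw [integral_cond_aux, hindA, integral_congr_ae (Filter.Eventually.of_forall hWZ),
      key W1 hW1m.aestronglyMeasurable hW1ind]
    field_simp
  have EWB : ∫ ω, W ω ∂μ[|B] = ∫ ω, W0 ω ∂μ := by
    rw [integral_cond_aux, hindB, integral_congr_ae (Filter.Eventually.of_forall hWZ'),
      keyB W0 hW0int hW0ind]
    field_simp
  -- denominator
  have hden : (∫ ω, W ω ∂μ[|A]) - ∫ ω, W ω ∂μ[|B] = (μ C).toReal := by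
    rw [EWA, EWB, ← integral_sub hW1int hW0int]
    have hae : (fun ω => W1 ω - W0 ω) =ᵐ[μ] C.indicator (fun _ => (1 : ℝ)) := by
      filter_upwards [hmono] with ω hω
      by_cases h : W0 ω < W1 ω
      · have h0 : W0 ω = 0 := by
          rcases hW0b ω with h' | h'
          · exact h'
          · exfalso; rcases hW1b ω with h'' | h'' <;> rw [h', h''] at h <;> linarith
        have h1 : W1 ω = 1 := by
          rcases hW1b ω with h' | h'
          · exfalso; rw [h0, h'] at h; linarith
          · exact h'
        simp [Set.indicator, hC_def, h, h0, h1]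
      · have : W0 ω = W1 ω := le_antisymm hω (not_lt.mp h)
        simp [Set.indicator, hC_def, h, this]
    rw [integral_congr_ae hae, integral_indicator hCmeas]
    simp
    rfl
  have hCpos : 0 < (μ C).toReal := ENNReal.toReal_pos hcomp.ne' (measure_ne_top μ _)
  -- numerator
  have hnum : (∫ ω, Y ω ∂μ[|A]) - ∫ ω, Y ω ∂μ[|B] = ∫ ω in C, (Y1 ω - Y0 ω) ∂μ := by
    rw [EYA, EYB, ← integral_sub hf1int hf0int]
    have hae : (fun ω => f1 ω - f0 ω) =ᵐ[μ]
        C.indicator (fun ω => Y1 ω - Y0 ω) := by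
      filter_upwards [hmono] with ω hω
      by_cases h : W0 ω < W1 ω
      · have h0 : W0 ω = 0 := by
          rcases hW0b ω with h' | h'
          · exact h'
          · exfalso; rcases hW1b ω with h'' | h'' <;> rw [h', h''] at h <;> linarith
        have h1 : W1 ω = 1 := by
          rcases hW1b ω with h' | h'
          · exfalso; rw [h0, h'] at h; linarith
          · exact h'
        simp only [hf1_def, hf0_def, Set.indicator, hC_def, Set.mem_setOf_eq]
        rw [if_pos h, h0, h1]; ring
      · have heq : W0 ω = W1 ω := le_antisymm hω (not_lt.mp h)
        simp only [hf1_def, hf0_def, Set.indicator, hC_def, Set.mem_setOf_eq]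
        rw [if_neg h, heq]; ring
    rw [integral_congr_ae hae, integral_indicator hCmeas]
  refine ⟨?_, hden, hCpos⟩
  rw [integral_cond_aux, hnum, hden, inv_mul_eq_div]
end

section
/- Under the assumptions of the LATE identification theorem, the denominator satisfies E[ρ₁(X) − ρ₀(X)] = P[W(1) > W(0)] > 0, so the ratio in the identification formula is well defined. -/
open MeasureTheory ProbabilityTheory
open scoped NNReal

lemma binary_integrable {Ω : Type*} [MeasurableSpace Ω] (μ : Measure Ω) [IsFiniteMeasure μ]
    {f : Ω → ℝ} (hfm : Measurable f) (hb : ∀ ω, f ω = 0 ∨ f ω = 1) : Integrable f μ := by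
  refine (integrable_const (1:ℝ)).mono' hfm.aestronglyMeasurable ?_
  filter_upwards with ω
  rcases hb ω with h | h <;> simp [h]

lemma cond_setIntegral {Ω : Type*} [MeasurableSpace Ω] (μ : Measure Ω) (B s : Set Ω)
    (hs : MeasurableSet s) (f : Ω → ℝ) :
    ∫ x in s, f x ∂(μ[|B]) = ((μ B)⁻¹).toReal • ∫ x in s ∩ B, f x ∂μ := by
  rw [ProbabilityTheory.cond, Measure.restrict_smul, integral_smul_measure,
    Measure.restrict_restrict hs]

lemma cond_condexp_ae_eq {Ω : Type*} {m : MeasurableSpace Ω} [mΩ : MeasurableSpace Ω]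
    (hm : m ≤ mΩ)
    (μ : Measure Ω) [IsProbabilityMeasure μ]
    (V ζ W : Ω → ℝ)
    (hVm : Measurable V) (hζm : Measurable ζ) (hWm : Measurable W)
    (hVb : ∀ ω, V ω = 0 ∨ V ω = 1) (hζb : ∀ ω, ζ ω = 0 ∨ ζ ω = 1)
    (hWb : ∀ ω, W ω = 0 ∨ W ω = 1)
    (hWeq : ∀ ω, ζ ω = 1 → W ω = V ω)
    (hfact : (μ[fun ω => ζ ω * V ω | m]) =ᵐ[μ] fun ω => (μ[ζ|m]) ω * (μ[V|m]) ω)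
    (hpos : ∀ᵐ ω ∂μ, 0 < (μ[ζ|m]) ω) :
    ((μ[|{ω | ζ ω = 1}])[W | m]) =ᵐ[μ] μ[V|m] := by
  set B : Set Ω := {ω | ζ ω = 1} with hB
  have hBmeas : MeasurableSet B := hζm (measurableSet_singleton 1)
  have hζind : ∀ ω, ζ ω = B.indicator (fun _ => (1:ℝ)) ω := by
    intro ω
    rcases hζb ω with h | h <;> simp [Set.indicator, hB, h]
  -- μ B ≠ 0
  have hμB : μ B ≠ 0 := by
    intro h0
    have hζ0 : ζ =ᵐ[μ] 0 := by
      refine measure_mono_null (fun ω hω => ?_) h0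
      simp only [Set.mem_setOf_eq, Pi.zero_apply] at hω ⊢
      rcases hζb ω with h | h
      · exact absurd h hω
      · exact h
    have hc0 : (μ[ζ|m]) =ᵐ[μ] 0 := by
      calc (μ[ζ|m]) =ᵐ[μ] μ[(0:Ω → ℝ)|m] := condExp_congr_ae hζ0
        _ = 0 := condExp_zero
    rcases (hpos.and hc0).exists with ⟨ω, h1, h2⟩
    rw [h2] at h1
    exact lt_irrefl _ h1
  have hμBne : μ B ≠ ⊤ := measure_ne_top μ B
  have hPB : IsProbabilityMeasure (μ[|B]) := cond_isProbabilityMeasure hμB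
  set g : Ω → ℝ := μ[V|m] with hgdef
  have hgint : Integrable g μ := integrable_condExp
  have hζint : Integrable ζ μ := binary_integrable μ hζm hζb
  have hζVint : Integrable (fun ω => ζ ω * V ω) μ := by
    refine binary_integrable μ (hζm.mul hVm) fun ω => ?_
    rcases hζb ω with h | h <;> rcases hVb ω with h' | h' <;> simp [h, h']
  have hgbdd : ∀ᵐ ω ∂μ, ‖g ω‖ ≤ (1:ℝ) := by
    have hb : ∀ᵐ ω ∂μ, |V ω| ≤ ((1:ℝ≥0):ℝ) := by
      filter_upwards with ω; rcases hVb ω with h | h <;> simp [h]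
    filter_upwards [ae_bdd_condExp_of_ae_bdd (R := 1) hb] with ω h using by
      simpa [Real.norm_eq_abs] using h
  have hgζint : Integrable (g * ζ) μ :=
    hζint.bdd_mul (c := 1)
      ((stronglyMeasurable_condExp.mono hm).aestronglyMeasurable) hgbdd
  -- key set-integral identity over μ
  have hkey : ∀ s : Set Ω, MeasurableSet[m] s →
      ∫ x in s ∩ B, g x ∂μ = ∫ x in s ∩ B, W x ∂μ := by
    intro s hs
    have hs0 : MeasurableSet s := hm s hs
    have hsB : MeasurableSet (s ∩ B) := hs0.inter hBmeas
    -- RHS: ∫_{s∩B} W = ∫_{s∩B} V = ∫_s ζ*V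
    have hr1 : ∫ x in s ∩ B, W x ∂μ = ∫ x in s ∩ B, V x ∂μ :=
      setIntegral_congr_fun hsB fun ω hω => hWeq ω hω.2
    have hr2 : ∫ x in s ∩ B, V x ∂μ = ∫ x in s, ζ x * V x ∂μ := by
      rw [← setIntegral_indicator hBmeas]
      refine setIntegral_congr_fun hs0 fun ω _ => ?_
      rcases hζb ω with h | h <;> simp [Set.indicator, hB, h]
    -- LHS: ∫_{s∩B} g = ∫_s ζ*g = ∫_s g*ζ
    have hl1 : ∫ x in s ∩ B, g x ∂μ = ∫ x in s, g x * ζ x ∂μ := by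
      rw [← setIntegral_indicator hBmeas]
      refine setIntegral_congr_fun hs0 fun ω _ => ?_
      rcases hζb ω with h | h <;> simp [Set.indicator, hB, h]
    -- condexp computations
    have hcl : ∫ x in s, g x * ζ x ∂μ = ∫ x in s, g x * (μ[ζ|m]) x ∂μ := by
      have hpull : (μ[g * ζ|m]) =ᵐ[μ] g * μ[ζ|m] :=
        condExp_mul_of_stronglyMeasurable_left stronglyMeasurable_condExp hgζint hζint
      calc ∫ x in s, g x * ζ x ∂μ = ∫ x in s, (μ[g * ζ|m]) x ∂μ :=
            (setIntegral_condExp hm hgζint hs).symm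
        _ = ∫ x in s, (g * μ[ζ|m]) x ∂μ :=
            integral_congr_ae (ae_restrict_of_ae (hpull.mono fun ω h => by simp [h]))
        _ = ∫ x in s, g x * (μ[ζ|m]) x ∂μ := rfl
    have hcr : ∫ x in s, ζ x * V x ∂μ = ∫ x in s, (μ[ζ|m]) x * g x ∂μ := by
      calc ∫ x in s, ζ x * V x ∂μ = ∫ x in s, (μ[fun ω => ζ ω * V ω|m]) x ∂μ :=
            (setIntegral_condExp hm hζVint hs).symm
        _ = ∫ x in s, (μ[ζ|m]) x * g x ∂μ :=
            integral_congr_ae (ae_restrict_of_ae (hfact.mono fun ω h => by simp [h]))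
    rw [hr1, hr2, hcr, hl1, hcl]
    exact integral_congr_ae (ae_restrict_of_ae (Filter.Eventually.of_forall fun ω => mul_comm _ _))
  -- g is a version of the conditional expectation under μ[|B]
  have hae1 : g =ᵐ[μ[|B]] ((μ[|B])[W|m]) := by
    refine ae_eq_condExp_of_forall_setIntegral_eq hm
      (binary_integrable (μ[|B]) hWm hWb) (fun s hs _ => ?_) (fun s hs _ => ?_) ?_
    · have hinv : (μ B)⁻¹ ≠ ⊤ := ENNReal.inv_ne_top.mpr hμB
      have hgcond : Integrable g (μ[|B]) := by
        rw [ProbabilityTheory.cond]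
        exact hgint.restrict.smul_measure hinv
      exact hgcond.integrableOn
    · rw [cond_setIntegral μ B s (hm s hs), cond_setIntegral μ B s (hm s hs), hkey s hs]
    · exact stronglyMeasurable_condExp.aestronglyMeasurable
  -- upgrade from a.e. μ[|B] to a.e. μ using overlap
  set h : Ω → ℝ := (μ[|B])[W|m] with hhdef
  have hgm : Measurable[m] g := stronglyMeasurable_condExp.measurable
  have hhm : Measurable[m] h := stronglyMeasurable_condExp.measurable
  set D : Set Ω := {ω | ¬ g ω = h ω} with hD
  have hDm : MeasurableSet[m] D := (measurableSet_eq_fun hgm hhm).compl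
  have hDm0 : MeasurableSet D := hm D hDm
  have hDB : μ (D ∩ B) = 0 := by
    have h1 := hae1
    rw [Filter.EventuallyEq, ae_iff] at h1
    rw [cond_apply hBmeas] at h1
    rcases mul_eq_zero.mp h1 with h2 | h2
    · exact absurd (ENNReal.inv_eq_zero.mp h2) hμBne
    · rw [Set.inter_comm] at h2; exact h2
  have hDzero : μ D = 0 := by
    by_contra hne
    have hμD : 0 < μ D := pos_iff_ne_zero.mpr hne
    have hint1 : ∫ x in D, (μ[ζ|m]) x ∂μ = ∫ x in D, ζ x ∂μ := setIntegral_condExp hm hζint hDm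
    have hint2 : ∫ x in D, ζ x ∂μ = 0 := by
      have : ∫ x in D, ζ x ∂μ = ∫ x in D, B.indicator (fun _ => (1:ℝ)) x ∂μ :=
        integral_congr_ae (Filter.Eventually.of_forall fun ω => hζind ω)
      rw [this, setIntegral_indicator hBmeas, setIntegral_const, measureReal_def, hDB]
      simp
    have hsupp : 0 < μ (Function.support (μ[ζ|m]) ∩ D) := by
      have hnull : μ {ω | ¬ 0 < (μ[ζ|m]) ω} = 0 := by
        rw [ae_iff] at hpos; exact hpos
      have hdiff : μ (D \ Function.support (μ[ζ|m])) = 0 := by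
        refine measure_mono_null (fun ω hω => ?_) hnull
        have : (μ[ζ|m]) ω = 0 := by
          by_contra hc; exact hω.2 hc
        simp [Set.mem_setOf_eq, this]
      have hle : μ D ≤ μ (D ∩ Function.support (μ[ζ|m])) + μ (D \ Function.support (μ[ζ|m])) :=
        measure_le_inter_add_diff μ D _
      rw [hdiff, add_zero] at hle
      rw [Set.inter_comm]
      exact lt_of_lt_of_le hμD hle
    have hposint : 0 < ∫ x in D, (μ[ζ|m]) x ∂μ := by
      refine (setIntegral_pos_iff_support_of_nonneg_ae ?_ integrable_condExp.integrableOn).mpr hsupp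
      exact ae_restrict_of_ae (hpos.mono fun ω h => le_of_lt h)
    rw [hint1, hint2] at hposint
    exact lt_irrefl _ hposint
  have : g =ᵐ[μ] h := by
    rw [Filter.EventuallyEq, ae_iff]; exact hDzero
  exact this.symm

theorem late_aux {Ω : Type*} {m : MeasurableSpace Ω} [mΩ : MeasurableSpace Ω]
    [StandardBorelSpace Ω] (hm : m ≤ mΩ)
    (μ : Measure Ω) [IsProbabilityMeasure μ]
    (W0 W1 Z W : Ω → ℝ)
    (hW0m : Measurable W0) (hW1m : Measurable W1) (hZm : Measurable Z)
    (hW0b : ∀ ω, W0 ω = 0 ∨ W0 ω = 1) (hW1b : ∀ ω, W1 ω = 0 ∨ W1 ω = 1)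
    (hZb : ∀ ω, Z ω = 0 ∨ Z ω = 1)
    (hWdef : W = fun ω => Z ω * W1 ω + (1 - Z ω) * W0 ω)
    (hindep : CondIndepFun m hm (fun ω => (W0 ω, W1 ω)) Z μ)
    (hmono : ∀ᵐ ω ∂μ, W0 ω ≤ W1 ω)
    (hoverlap : ∀ᵐ ω ∂μ, 0 < (μ[Z | m]) ω ∧ (μ[Z | m]) ω < 1) :
    (∫ ω, (((μ[|{ω' | Z ω' = 1}])[W | m]) ω - ((μ[|{ω' | Z ω' = 0}])[W | m]) ω) ∂μ)
      = (μ {ω | W0 ω < W1 ω}).toReal := by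
  have hWm : Measurable W := by
    rw [hWdef]
    exact (hZm.mul hW1m).add ((measurable_const.sub hZm).mul hW0m)
  have hWb : ∀ ω, W ω = 0 ∨ W ω = 1 := by
    intro ω
    rcases hZb ω with hz | hz
    · rcases hW0b ω with h | h <;> simp [hWdef, hz, h]
    · rcases hW1b ω with h | h <;> simp [hWdef, hz, h]
  set ζ0 : Ω → ℝ := fun ω => 1 - Z ω with hζ0def
  have hζ0m : Measurable ζ0 := measurable_const.sub hZm
  have hζ0b : ∀ ω, ζ0 ω = 0 ∨ ζ0 ω = 1 := by
    intro ω
    rcases hZb ω with hz | hz <;> simp [hζ0def, hz]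
  have hiff := (condIndepFun_iff_condExp_inter_preimage_eq_mul
    (hW0m.prodMk hW1m) hZm).mp hindep
  have hfact1 : (μ[fun ω => Z ω * W1 ω | m]) =ᵐ[μ]
      fun ω => (μ[Z|m]) ω * (μ[W1|m]) ω := by
    have h := hiff (Set.univ ×ˢ ({1} : Set ℝ)) ({1} : Set ℝ)
      (MeasurableSet.univ.prod (measurableSet_singleton 1)) (measurableSet_singleton 1)
    have e1 : Set.indicator ((fun ω => (W0 ω, W1 ω)) ⁻¹' (Set.univ ×ˢ ({1} : Set ℝ)) ∩
        Z ⁻¹' {1}) (fun _ => (1:ℝ)) = fun ω => Z ω * W1 ω := by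
      funext ω
      rcases hZb ω with hz | hz <;> rcases hW1b ω with hw | hw <;>
        simp [Set.indicator, hz, hw]
    have e2 : Set.indicator ((fun ω => (W0 ω, W1 ω)) ⁻¹' (Set.univ ×ˢ ({1} : Set ℝ)))
        (fun _ => (1:ℝ)) = W1 := by
      funext ω
      rcases hW1b ω with hw | hw <;> simp [Set.indicator, hw]
    have e3 : Set.indicator (Z ⁻¹' ({1} : Set ℝ)) (fun _ => (1:ℝ)) = Z := by
      funext ω
      rcases hZb ω with hz | hz <;> simp [Set.indicator, hz]
    rw [e1, e2, e3] at h
    exact h.trans (Filter.Eventually.of_forall fun ω => mul_comm _ _)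
  have hfact0 : (μ[fun ω => ζ0 ω * W0 ω | m]) =ᵐ[μ]
      fun ω => (μ[ζ0|m]) ω * (μ[W0|m]) ω := by
    have h := hiff (({1} : Set ℝ) ×ˢ Set.univ) ({0} : Set ℝ)
      ((measurableSet_singleton 1).prod MeasurableSet.univ) (measurableSet_singleton 0)
    have e1 : Set.indicator ((fun ω => (W0 ω, W1 ω)) ⁻¹' (({1} : Set ℝ) ×ˢ Set.univ) ∩
        Z ⁻¹' {0}) (fun _ => (1:ℝ)) = fun ω => ζ0 ω * W0 ω := by
      funext ω
      rcases hZb ω with hz | hz <;> rcases hW0b ω with hw | hw <;>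
        simp [Set.indicator, hζ0def, hz, hw]
    have e2 : Set.indicator ((fun ω => (W0 ω, W1 ω)) ⁻¹' (({1} : Set ℝ) ×ˢ Set.univ))
        (fun _ => (1:ℝ)) = W0 := by
      funext ω
      rcases hW0b ω with hw | hw <;> simp [Set.indicator, hw]
    have e3 : Set.indicator (Z ⁻¹' ({0} : Set ℝ)) (fun _ => (1:ℝ)) = ζ0 := by
      funext ω
      rcases hZb ω with hz | hz <;> simp [Set.indicator, hζ0def, hz]
    rw [e1, e2, e3] at h
    exact h.trans (Filter.Eventually.of_forall fun ω => mul_comm _ _)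
  have hcondζ0 : (μ[ζ0|m]) =ᵐ[μ] fun ω => 1 - (μ[Z|m]) ω := by
    have hc : ζ0 = (fun _ => (1:ℝ)) - Z := by funext ω; simp [hζ0def]
    have h1 : (μ[(fun _ => (1:ℝ)) - Z|m]) =ᵐ[μ] μ[fun _ => (1:ℝ)|m] - μ[Z|m] :=
      condExp_sub (integrable_const 1) (binary_integrable μ hZm hZb) m
    have h2 : (μ[fun _ => (1:ℝ)|m]) = fun _ => (1:ℝ) := condExp_const hm 1
    rw [hc]
    filter_upwards [h1] with ω hω
    rw [hω]
    simp [h2]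
  have hpos1 : ∀ᵐ ω ∂μ, 0 < (μ[Z|m]) ω := hoverlap.mono fun ω h => h.1
  have hpos0 : ∀ᵐ ω ∂μ, 0 < (μ[ζ0|m]) ω := by
    filter_upwards [hoverlap, hcondζ0] with ω h hc
    rw [hc]
    linarith [h.2]
  have h1 : ((μ[|{ω' | Z ω' = 1}])[W | m]) =ᵐ[μ] μ[W1|m] :=
    cond_condexp_ae_eq hm μ W1 Z W hW1m hZm hWm hW1b hZb hWb
      (fun ω hω => by simp [hWdef, hω]) hfact1 hpos1
  have h0 : ((μ[|{ω' | Z ω' = 0}])[W | m]) =ᵐ[μ] μ[W0|m] := by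
    have hset : {ω' | Z ω' = 0} = {ω | ζ0 ω = 1} := by
      ext ω
      simp only [Set.mem_setOf_eq, hζ0def]
      constructor
      · intro h; rw [h]; ring
      · intro h; linarith
    rw [hset]
    exact cond_condexp_ae_eq hm μ W0 ζ0 W hW0m hζ0m hWm hW0b hζ0b hWb
      (fun ω hω => by
        have hω' : 1 - Z ω = 1 := hω
        have hz : Z ω = 0 := by linarith
        simp [hWdef, hz]) hfact0 hpos0
  have hW1int : Integrable W1 μ := binary_integrable μ hW1m hW1b
  have hW0int : Integrable W0 μ := binary_integrable μ hW0m hW0b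
  have hlt : MeasurableSet {ω | W0 ω < W1 ω} := measurableSet_lt hW0m hW1m
  have step1 : (∫ ω, (((μ[|{ω' | Z ω' = 1}])[W | m]) ω -
      ((μ[|{ω' | Z ω' = 0}])[W | m]) ω) ∂μ)
      = ∫ ω, ((μ[W1|m]) ω - (μ[W0|m]) ω) ∂μ := by
    refine integral_congr_ae ?_
    filter_upwards [h1, h0] with ω e1 e0
    rw [e1, e0]
  rw [step1, integral_sub integrable_condExp integrable_condExp,
    integral_condExp hm, integral_condExp hm, ← integral_sub hW1int hW0int]
  have step2 : (∫ ω, (W1 ω - W0 ω) ∂μ)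
      = ∫ ω, Set.indicator {ω' | W0 ω' < W1 ω'} (fun _ => (1:ℝ)) ω ∂μ := by
    refine integral_congr_ae ?_
    filter_upwards [hmono] with ω hω
    rcases hW0b ω with h00 | h01 <;> rcases hW1b ω with h10 | h11
    · simp [Set.indicator, h00, h10]
    · simp [Set.indicator, h00, h11]
    · exfalso; rw [h01, h10] at hω; linarith
    · simp [Set.indicator, h01, h11]
  rw [step2]
  exact integral_indicator_one hlt

/-- Under the assumptions of the LATE identification theorem, the denominator satisfies
`E[ρ₁(X) - ρ₀(X)] = P[W(1) > W(0)] > 0`, so the identifying ratio is well defined. -/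
theorem late_denominator_eq_complier_prob
    {Ω 𝓧 : Type*} [MeasurableSpace Ω] [StandardBorelSpace Ω] [MeasurableSpace 𝓧]
    (μ : Measure Ω) [IsProbabilityMeasure μ]
    (W0 W1 Z : Ω → ℝ) (X : Ω → 𝓧)
    (hW0m : Measurable W0) (hW1m : Measurable W1)
    (hZm : Measurable Z) (hX : Measurable X)
    (hW0b : ∀ ω, W0 ω = 0 ∨ W0 ω = 1) (hW1b : ∀ ω, W1 ω = 0 ∨ W1 ω = 1)
    (hZb : ∀ ω, Z ω = 0 ∨ Z ω = 1)
    (W : Ω → ℝ) (hWdef : W = fun ω => Z ω * W1 ω + (1 - Z ω) * W0 ω)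
    (hindep : CondIndepFun (MeasurableSpace.comap X inferInstance) hX.comap_le
      (fun ω => (W0 ω, W1 ω)) Z μ)
    (hmono : ∀ᵐ ω ∂μ, W0 ω ≤ W1 ω)
    (hcomp : 0 < μ {ω | W0 ω < W1 ω})
    (hoverlap : ∀ᵐ ω ∂μ,
      0 < (μ[Z | MeasurableSpace.comap X inferInstance]) ω ∧
        (μ[Z | MeasurableSpace.comap X inferInstance]) ω < 1) :
    (∫ ω, (((μ[|{ω' | Z ω' = 1}])[W | MeasurableSpace.comap X inferInstance]) ω -
           ((μ[|{ω' | Z ω' = 0}])[W | MeasurableSpace.comap X inferInstance]) ω) ∂μ)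
      = (μ {ω | W0 ω < W1 ω}).toReal
    ∧ 0 < (μ {ω | W0 ω < W1 ω}).toReal :=
  ⟨late_aux hX.comap_le μ W0 W1 Z W hW0m hW1m hZm hW0b hW1b hZb hWdef hindep hmono hoverlap,
    ENNReal.toReal_pos hcomp.ne' (measure_ne_top μ _)⟩
end

section
/- (Theorem 2: identification of LATT) Under exclusion, conditional independence [Y(0),Y(1),W(0),W(1)] ⟂ Z | X, monotonicity, existence of compliers, and the one-sided overlap condition P(Z=1|X=x) < 1 for almost all x together with P(Z=1) > 0, the local average treatment effect on the treated satisfies τ_LATT = E[Y(1)−Y(0) | W(1)>W(0), W=1] = (E[Y|Z=1] − E[μ₀(X)|Z=1]) / (E[W|Z=1] − E[ρ₀(X)|Z=1]). -/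
set_option synthInstance.maxHeartbeats 1000000
set_option maxHeartbeats 1000000

open MeasureTheory ProbabilityTheory Filter Set Topology

local notation "σ⟮" X "⟯" => MeasurableSpace.comap X inferInstance

section Aux

variable {Ω β 𝓧 : Type*}

lemma mul_indicator_one_eq_indicator {A : Set Ω} (f : Ω → ℝ) :
    (f * A.indicator (fun _ => (1:ℝ))) = A.indicator f := by
  funext ω; by_cases h : ω ∈ A <;> simp [Set.indicator, h]

lemma condexp_mul_indicator_of_condIndepFun
    [mΩ : MeasurableSpace Ω] [StandardBorelSpace Ω] [MeasurableSpace β] [MeasurableSpace 𝓧]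
    {μ : Measure Ω} [IsProbabilityMeasure μ]
    {q : Ω → β} {Z : Ω → ℝ} {X : Ω → 𝓧}
    (hq : Measurable q) (hZ : Measurable Z) (hX : Measurable X)
    {u : β → ℝ} (hu : AEStronglyMeasurable u (μ.map q)) (hU : Integrable (u ∘ q) μ)
    (hind : CondIndepFun σ⟮X⟯ hX.comap_le q Z μ) :
    μ[(u ∘ q) * (Z ⁻¹' {1}).indicator (fun _ => (1:ℝ)) | σ⟮X⟯]
      =ᵐ[μ] μ[u ∘ q | σ⟮X⟯] * μ[(Z ⁻¹' {1}).indicator (fun _ => (1:ℝ)) | σ⟮X⟯] := by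
  set B : Set Ω := Z ⁻¹' {1} with hBdef
  have hB : MeasurableSet[mΩ] B := hZ (measurableSet_singleton 1)
  set ζ : Ω → ℝ := B.indicator (fun _ => (1:ℝ)) with hζdef
  have hζint : Integrable ζ μ := (integrable_const (1:ℝ)).indicator hB
  have hζbd : ∀ ω, ‖ζ ω‖ ≤ 1 := by
    intro ω; by_cases h : ω ∈ B <;> simp [ζ, Set.indicator, h]
  set P : (β → ℝ) → Prop :=
    fun v => μ[(v ∘ q) * ζ | σ⟮X⟯] =ᵐ[μ] μ[v ∘ q | σ⟮X⟯] * μ[ζ | σ⟮X⟯] with hPdef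
  have hint : ∀ v : β → ℝ, Integrable (v ∘ q) μ → Integrable ((v ∘ q) * ζ) μ := by
    intro v hv
    rw [mul_indicator_one_eq_indicator]
    exact hv.indicator hB
  have hζab : ∀ᵐ ω ∂μ, ‖(μ[ζ | σ⟮X⟯]) ω‖ ≤ 1 := by
    have hζle1 : ζ ≤ᵐ[μ] fun _ => (1:ℝ) := Eventually.of_forall fun ω => by
      by_cases h : ω ∈ B <;> simp [ζ, Set.indicator, h]
    have h0 : 0 ≤ᵐ[μ] μ[ζ | σ⟮X⟯] := condExp_nonneg (Eventually.of_forall fun ω =>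
      Set.indicator_nonneg (fun _ _ => zero_le_one) ω)
    have h1 : μ[ζ | σ⟮X⟯] ≤ᵐ[μ] fun _ => (1:ℝ) := by
      have h2 := condExp_mono (μ := μ) (m := σ⟮X⟯) hζint (integrable_const 1) hζle1
      rwa [condExp_const hX.comap_le (1:ℝ)] at h2
    filter_upwards [h0, h1] with ω h0ω h1ω
    rw [Real.norm_eq_abs, abs_le]
    refine ⟨?_, h1ω⟩
    have h0' : (0:ℝ) ≤ (μ[ζ | σ⟮X⟯]) ω := h0ω
    linarith
  have main : ∀ ⦃v : β → ℝ⦄, Integrable v (μ.map q) → P v := by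
    refine Integrable.induction P ?_ ?_ ?_ ?_
    · -- indicators
      intro c s hs _
      have h1 : ((s.indicator fun _ => c) ∘ q) = c • ((q ⁻¹' s).indicator fun _ => (1:ℝ)) := by
        funext ω
        by_cases h : q ω ∈ s <;> simp [Set.indicator, h, Function.comp]
      have h2 : ((s.indicator fun _ => c) ∘ q) * ζ
          = c • (((q ⁻¹' s) ∩ B).indicator fun _ => (1:ℝ)) := by
        funext ω
        by_cases h : q ω ∈ s <;> by_cases h' : ω ∈ B <;>
          simp [Set.indicator, h, h', ζ, Function.comp]
      have hkey := (condIndepFun_iff_condExp_inter_preimage_eq_mul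
        (hm' := hX.comap_le) hq hZ).mp hind s {1} hs (measurableSet_singleton 1)
      show μ[((s.indicator fun _ => c) ∘ q) * ζ | σ⟮X⟯]
          =ᵐ[μ] μ[(s.indicator fun _ => c) ∘ q | σ⟮X⟯] * μ[ζ | σ⟮X⟯]
      rw [h2, h1]
      calc μ[c • (((q ⁻¹' s) ∩ B).indicator fun _ => (1:ℝ)) | σ⟮X⟯]
          =ᵐ[μ] c • μ[((q ⁻¹' s) ∩ B).indicator fun _ => (1:ℝ) | σ⟮X⟯] := condExp_smul c _ _
        _ =ᵐ[μ] (fun ω => c * ((μ[(q ⁻¹' s).indicator fun _ => (1:ℝ) | σ⟮X⟯]) ω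
              * (μ[B.indicator fun _ => (1:ℝ) | σ⟮X⟯]) ω)) := by
            exact hkey.mono fun ω h => by simp only [Pi.smul_apply, smul_eq_mul]; exact congrArg (c * ·) h
        _ = (c • μ[(q ⁻¹' s).indicator fun _ => (1:ℝ) | σ⟮X⟯]) * μ[ζ | σ⟮X⟯] := by
            funext ω
            simp [ζ, mul_assoc]
        _ =ᵐ[μ] μ[c • ((q ⁻¹' s).indicator fun _ => (1:ℝ)) | σ⟮X⟯] * μ[ζ | σ⟮X⟯] :=
            ((condExp_smul c _ _).symm).mul (EventuallyEq.refl _ _)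
    · -- additivity
      intro f g _ hfi hgi hPf hPg
      have hf' : Integrable (f ∘ q) μ :=
        (integrable_map_measure hfi.aestronglyMeasurable hq.aemeasurable).mp hfi
      have hg' : Integrable (g ∘ q) μ :=
        (integrable_map_measure hgi.aestronglyMeasurable hq.aemeasurable).mp hgi
      have h1 : ((f + g) ∘ q) * ζ = (f ∘ q) * ζ + (g ∘ q) * ζ := by
        funext ω; simp [Function.comp, add_mul]
      have h2 : ((f + g) ∘ q) = (f ∘ q) + (g ∘ q) := rfl
      show μ[((f + g) ∘ q) * ζ | σ⟮X⟯] =ᵐ[μ] μ[(f + g) ∘ q | σ⟮X⟯] * μ[ζ | σ⟮X⟯]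
      rw [h1, h2]
      calc μ[(f ∘ q) * ζ + (g ∘ q) * ζ | σ⟮X⟯]
          =ᵐ[μ] μ[(f ∘ q) * ζ | σ⟮X⟯] + μ[(g ∘ q) * ζ | σ⟮X⟯] :=
            condExp_add (hint f hf') (hint g hg') _
        _ =ᵐ[μ] μ[f ∘ q | σ⟮X⟯] * μ[ζ | σ⟮X⟯] + μ[g ∘ q | σ⟮X⟯] * μ[ζ | σ⟮X⟯] := hPf.add hPg
        _ = (μ[f ∘ q | σ⟮X⟯] + μ[g ∘ q | σ⟮X⟯]) * μ[ζ | σ⟮X⟯] := by funext ω; simp [add_mul]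
        _ =ᵐ[μ] μ[(f ∘ q) + (g ∘ q) | σ⟮X⟯] * μ[ζ | σ⟮X⟯] :=
            ((condExp_add hf' hg' _).symm).mul (EventuallyEq.refl _ _)
    · -- closedness in L¹
      refine IsSeqClosed.isClosed ?_
      intro fs φ hmem htend
      have hδ : Tendsto (fun n => eLpNorm (⇑(fs n) - ⇑φ) 1 (μ.map q)) atTop (𝓝 0) :=
        (Lp.tendsto_Lp_iff_tendsto_eLpNorm' fs φ).mp htend
      have hφi : Integrable (⇑φ ∘ q) μ :=
        (integrable_map_measure (Lp.aestronglyMeasurable φ) hq.aemeasurable).mp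
          (L1.integrable_coeFn φ)
      have hgi : ∀ n, Integrable (⇑(fs n) ∘ q) μ := fun n =>
        (integrable_map_measure (Lp.aestronglyMeasurable (fs n)) hq.aemeasurable).mp
          (L1.integrable_coeFn (fs n))
      set L : Ω → ℝ := μ[(⇑φ ∘ q) * ζ | σ⟮X⟯] with hLdef
      set R : Ω → ℝ := μ[⇑φ ∘ q | σ⟮X⟯] * μ[ζ | σ⟮X⟯] with hRdef
      have key : ∀ n, eLpNorm (L - R) 1 μ
          ≤ eLpNorm (⇑(fs n) - ⇑φ) 1 (μ.map q) + eLpNorm (⇑(fs n) - ⇑φ) 1 (μ.map q) := by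
        intro n
        have hQ : μ[(⇑(fs n) ∘ q) * ζ | σ⟮X⟯] =ᵐ[μ] μ[⇑(fs n) ∘ q | σ⟮X⟯] * μ[ζ | σ⟮X⟯] :=
          hmem n
        have e1 : eLpNorm (L - μ[(⇑(fs n) ∘ q) * ζ | σ⟮X⟯]) 1 μ
            ≤ eLpNorm (⇑(fs n) - ⇑φ) 1 (μ.map q) := by
          have hd1 : L - μ[(⇑(fs n) ∘ q) * ζ | σ⟮X⟯]
              =ᵐ[μ] μ[((⇑φ ∘ q) * ζ) - ((⇑(fs n) ∘ q) * ζ) | σ⟮X⟯] :=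
            (condExp_sub (hint _ hφi) (hint _ (hgi n)) _).symm
          rw [eLpNorm_congr_ae hd1]
          refine (eLpNorm_one_condExp_le_eLpNorm _).trans ?_
          have hfun : ((⇑φ ∘ q) * ζ) - ((⇑(fs n) ∘ q) * ζ)
              = fun ω => ((⇑φ - ⇑(fs n)) ∘ q) ω * ζ ω := by
            funext ω; simp [Function.comp, sub_mul]
          rw [hfun]
          have hb : ∀ ω, ‖((⇑φ - ⇑(fs n)) ∘ q) ω * ζ ω‖ ≤ ‖((⇑φ - ⇑(fs n)) ∘ q) ω‖ := by
            intro ω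
            rw [norm_mul]
            calc ‖((⇑φ - ⇑(fs n)) ∘ q) ω‖ * ‖ζ ω‖
                ≤ ‖((⇑φ - ⇑(fs n)) ∘ q) ω‖ * 1 :=
                  mul_le_mul_of_nonneg_left (hζbd ω) (norm_nonneg _)
              _ = ‖((⇑φ - ⇑(fs n)) ∘ q) ω‖ := mul_one _
          refine (eLpNorm_mono hb).trans ?_
          rw [eLpNorm_map_measure ((Lp.aestronglyMeasurable (fs n)).sub
            (Lp.aestronglyMeasurable φ)) hq.aemeasurable]
          have hneg : ((⇑φ - ⇑(fs n)) ∘ q : Ω → ℝ) = -((⇑(fs n) - ⇑φ : β → ℝ) ∘ q) := by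
            funext x; simp
          rw [hneg, eLpNorm_neg]
        have e2 : eLpNorm ((μ[⇑(fs n) ∘ q | σ⟮X⟯] * μ[ζ | σ⟮X⟯]) - R) 1 μ
            ≤ eLpNorm (⇑(fs n) - ⇑φ) 1 (μ.map q) := by
          have hd2 : (μ[⇑(fs n) ∘ q | σ⟮X⟯] * μ[ζ | σ⟮X⟯]) - R
              = (μ[⇑(fs n) ∘ q | σ⟮X⟯] - μ[⇑φ ∘ q | σ⟮X⟯]) * μ[ζ | σ⟮X⟯] := by
            funext ω; simp [R, sub_mul]
          rw [hd2]
          have hb : ∀ᵐ ω ∂μ, ‖((μ[⇑(fs n) ∘ q | σ⟮X⟯] - μ[⇑φ ∘ q | σ⟮X⟯]) * μ[ζ | σ⟮X⟯]) ω‖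
              ≤ ‖(μ[⇑(fs n) ∘ q | σ⟮X⟯] - μ[⇑φ ∘ q | σ⟮X⟯]) ω‖ := by
            filter_upwards [hζab] with ω hω
            rw [Pi.mul_apply, norm_mul]
            calc ‖(μ[⇑(fs n) ∘ q | σ⟮X⟯] - μ[⇑φ ∘ q | σ⟮X⟯]) ω‖ * ‖(μ[ζ | σ⟮X⟯]) ω‖
                ≤ ‖(μ[⇑(fs n) ∘ q | σ⟮X⟯] - μ[⇑φ ∘ q | σ⟮X⟯]) ω‖ * 1 :=
                  mul_le_mul_of_nonneg_left hω (norm_nonneg _)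
              _ = ‖(μ[⇑(fs n) ∘ q | σ⟮X⟯] - μ[⇑φ ∘ q | σ⟮X⟯]) ω‖ := mul_one _
          refine (eLpNorm_mono_ae hb).trans ?_
          rw [eLpNorm_congr_ae (condExp_sub (hgi n) hφi _).symm]
          refine (eLpNorm_one_condExp_le_eLpNorm _).trans ?_
          rw [eLpNorm_map_measure ((Lp.aestronglyMeasurable (fs n)).sub
            (Lp.aestronglyMeasurable φ)) hq.aemeasurable]
          exact le_rfl
        have hsum : L - R =ᵐ[μ] (L - μ[(⇑(fs n) ∘ q) * ζ | σ⟮X⟯])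
            + ((μ[⇑(fs n) ∘ q | σ⟮X⟯] * μ[ζ | σ⟮X⟯]) - R) := by
          filter_upwards [hQ] with ω hω
          simp only [Pi.add_apply, Pi.sub_apply, Pi.mul_apply] at *
          rw [hω]; ring
        rw [eLpNorm_congr_ae hsum]
        refine (eLpNorm_add_le ?_ ?_ le_rfl).trans (add_le_add e1 e2)
        · exact ((stronglyMeasurable_condExp.sub stronglyMeasurable_condExp).mono
            hX.comap_le).aestronglyMeasurable
        · exact (((stronglyMeasurable_condExp.mul stronglyMeasurable_condExp).sub
            (stronglyMeasurable_condExp.mul stronglyMeasurable_condExp)).mono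
            hX.comap_le).aestronglyMeasurable
      have h0 : Tendsto (fun n => eLpNorm (⇑(fs n) - ⇑φ) 1 (μ.map q)
          + eLpNorm (⇑(fs n) - ⇑φ) 1 (μ.map q)) atTop (𝓝 0) := by
        simpa using hδ.add hδ
      have hz : eLpNorm (L - R) 1 μ = 0 := le_zero_iff.mp (ge_of_tendsto' h0 key)
      have hLm : AEStronglyMeasurable L μ :=
        (stronglyMeasurable_condExp.mono hX.comap_le).aestronglyMeasurable
      have hRm : AEStronglyMeasurable R μ :=
        ((stronglyMeasurable_condExp.mul stronglyMeasurable_condExp).mono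
          hX.comap_le).aestronglyMeasurable
      exact (sub_ae_eq_zero _ _).mp ((eLpNorm_eq_zero_iff (hLm.sub hRm) one_ne_zero).mp hz)
    · -- stability under a.e. equality
      intro f g hfg hfi hPf
      have hfg' : f ∘ q =ᵐ[μ] g ∘ q := ae_of_ae_map hq.aemeasurable hfg
      show μ[(g ∘ q) * ζ | σ⟮X⟯] =ᵐ[μ] μ[g ∘ q | σ⟮X⟯] * μ[ζ | σ⟮X⟯]
      calc μ[(g ∘ q) * ζ | σ⟮X⟯]
          =ᵐ[μ] μ[(f ∘ q) * ζ | σ⟮X⟯] :=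
            condExp_congr_ae ((hfg'.symm).mul (EventuallyEq.refl _ _))
        _ =ᵐ[μ] μ[f ∘ q | σ⟮X⟯] * μ[ζ | σ⟮X⟯] := hPf
        _ =ᵐ[μ] μ[g ∘ q | σ⟮X⟯] * μ[ζ | σ⟮X⟯] :=
            (condExp_congr_ae hfg').mul (EventuallyEq.refl _ _)
  exact main ((integrable_map_measure hu hq.aemeasurable).mpr hU)

end Aux

section Aux2

variable {Ω β 𝓧 : Type*}

lemma integrable_of_binary [mΩ : MeasurableSpace Ω] {μ : Measure Ω} [IsProbabilityMeasure μ]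
    {Z : Ω → ℝ} (hZ : Measurable Z) (hZb : ∀ ω, Z ω = 0 ∨ Z ω = 1) : Integrable Z μ := by
  refine (integrable_const (1:ℝ)).mono hZ.aestronglyMeasurable
    (Filter.Eventually.of_forall fun ω => ?_)
  rcases hZb ω with h | h <;> simp [h]

lemma condexp_mul_binary_of_condIndepFun
    [mΩ : MeasurableSpace Ω] [StandardBorelSpace Ω] [MeasurableSpace β] [MeasurableSpace 𝓧]
    {μ : Measure Ω} [IsProbabilityMeasure μ]
    {q : Ω → β} {Z : Ω → ℝ} {X : Ω → 𝓧}
    (hq : Measurable q) (hZ : Measurable Z) (hX : Measurable X)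
    (hZb : ∀ ω, Z ω = 0 ∨ Z ω = 1)
    {u : β → ℝ} (hu : Measurable u) (hU : Integrable (u ∘ q) μ)
    (hind : CondIndepFun σ⟮X⟯ hX.comap_le q Z μ) :
    μ[(u ∘ q) * Z | σ⟮X⟯] =ᵐ[μ] μ[u ∘ q | σ⟮X⟯] * μ[Z | σ⟮X⟯] := by
  have hZind : (Z ⁻¹' {1}).indicator (fun _ => (1:ℝ)) = Z := by
    funext ω
    rcases hZb ω with h | h
    · have : ω ∉ Z ⁻¹' {1} := by simp [Set.mem_preimage, h]
      simp [Set.indicator_of_notMem this, h]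
    · have : ω ∈ Z ⁻¹' {1} := by simp [Set.mem_preimage, h]
      simp [Set.indicator_of_mem this, h]
  rw [← hZind]
  exact condexp_mul_indicator_of_condIndepFun hq hZ hX
    hu.aestronglyMeasurable hU hind

lemma setIntegral_condExp_mul_binary
    [mΩ : MeasurableSpace Ω] [StandardBorelSpace Ω] [MeasurableSpace β] [MeasurableSpace 𝓧]
    {μ : Measure Ω} [IsProbabilityMeasure μ]
    {q : Ω → β} {Z : Ω → ℝ} {X : Ω → 𝓧}
    (hq : Measurable q) (hZ : Measurable Z) (hX : Measurable X)
    (hZb : ∀ ω, Z ω = 0 ∨ Z ω = 1)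
    {u : β → ℝ} (hu : Measurable u) (hU : Integrable (u ∘ q) μ)
    (hind : CondIndepFun σ⟮X⟯ hX.comap_le q Z μ)
    {A : Set Ω} (hA : MeasurableSet[σ⟮X⟯] A) :
    ∫ ω in A, (μ[u ∘ q | σ⟮X⟯]) ω * Z ω ∂μ = ∫ ω in A, u (q ω) * Z ω ∂μ := by
  have hZi : Integrable Z μ := integrable_of_binary hZ hZb
  have hZnorm : ∀ (f : Ω → ℝ) ω, ‖f ω * Z ω‖ ≤ ‖f ω‖ := by
    intro f ω
    rw [norm_mul]
    rcases hZb ω with h | h <;> simp [h]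
  have hgZ : Integrable ((μ[u ∘ q | σ⟮X⟯] : Ω → ℝ) * Z) μ := by
    refine (integrable_condExp (f := u ∘ q) (m := σ⟮X⟯) (μ := μ)).mono
      (((stronglyMeasurable_condExp.mono hX.comap_le).aestronglyMeasurable).mul
        hZ.aestronglyMeasurable) (Filter.Eventually.of_forall fun ω => ?_)
    exact hZnorm _ ω
  have hUZ : Integrable ((u ∘ q) * Z) μ := by
    refine hU.mono (((hu.comp hq).aestronglyMeasurable).mul hZ.aestronglyMeasurable)
      (Filter.Eventually.of_forall fun ω => ?_)
    exact hZnorm _ ω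
  have hAm : MeasurableSet A := hX.comap_le A hA
  have hpull : μ[(μ[u ∘ q | σ⟮X⟯] : Ω → ℝ) * Z | σ⟮X⟯]
      =ᵐ[μ] (μ[u ∘ q | σ⟮X⟯]) * μ[Z | σ⟮X⟯] :=
    condExp_mul_of_stronglyMeasurable_left stronglyMeasurable_condExp hgZ hZi
  have hprod := condexp_mul_binary_of_condIndepFun hq hZ hX hZb hu hU hind
  calc ∫ ω in A, (μ[u ∘ q | σ⟮X⟯]) ω * Z ω ∂μ
      = ∫ ω in A, (μ[(μ[u ∘ q | σ⟮X⟯] : Ω → ℝ) * Z | σ⟮X⟯]) ω ∂μ :=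
        (setIntegral_condExp hX.comap_le hgZ hA).symm
    _ = ∫ ω in A, (μ[u ∘ q | σ⟮X⟯]) ω * (μ[Z | σ⟮X⟯]) ω ∂μ :=
        setIntegral_congr_ae hAm (hpull.mono fun ω h _ => h)
    _ = ∫ ω in A, (μ[(u ∘ q) * Z | σ⟮X⟯]) ω ∂μ :=
        setIntegral_congr_ae hAm (hprod.symm.mono fun ω h _ => h)
    _ = ∫ ω in A, u (q ω) * Z ω ∂μ := setIntegral_condExp hX.comap_le hUZ hA

lemma null_of_null_inter
    [mΩ : MeasurableSpace Ω] [MeasurableSpace 𝓧]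
    {μ : Measure Ω} [IsProbabilityMeasure μ]
    {Z : Ω → ℝ} {X : Ω → 𝓧}
    (hZ : Measurable Z) (hX : Measurable X)
    (hZb : ∀ ω, Z ω = 0 ∨ Z ω = 1)
    (hoverlap : ∀ᵐ ω ∂μ, (μ[Z | σ⟮X⟯]) ω < 1)
    (D : Set Ω) (hD : MeasurableSet[σ⟮X⟯] D)
    (h0 : μ (D ∩ {ω | Z ω = 0}) = 0) : μ D = 0 := by
  have hs0m : MeasurableSet {ω | Z ω = 0} := hZ (measurableSet_singleton 0)
  have hZi : Integrable Z μ := integrable_of_binary hZ hZb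
  have hDm : MeasurableSet D := hX.comap_le D hD
  have h1Zi : Integrable (fun ω => (1:ℝ) - Z ω) μ := (integrable_const 1).sub hZi
  have hindic : (fun ω => (1:ℝ) - Z ω) = Set.indicator {ω | Z ω = 0} (fun _ => (1:ℝ)) := by
    funext ω
    rcases hZb ω with h | h
    · have hmem : ω ∈ {ω | Z ω = 0} := h
      simp [Set.indicator_of_mem hmem, h]
    · have hmem : ω ∉ {ω | Z ω = 0} := by simp [Set.mem_setOf_eq, h]
      simp [Set.indicator_of_notMem hmem, h]
  have hA1 : ∫ ω in D, (1 - Z ω) ∂μ = (μ (D ∩ {ω | Z ω = 0})).toReal := by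
    rw [hindic, setIntegral_indicator hs0m, setIntegral_const]
    simp [Measure.real]
  have hce : μ[(fun ω => (1:ℝ) - Z ω) | σ⟮X⟯] =ᵐ[μ] fun ω => 1 - (μ[Z | σ⟮X⟯]) ω := by
    have h := condExp_sub (μ := μ) (m := σ⟮X⟯) (f := fun _ => (1:ℝ)) (g := Z)
      (integrable_const (1:ℝ)) hZi
    rw [condExp_const hX.comap_le (1:ℝ)] at h
    exact h
  have hA2 : ∫ ω in D, (1 - Z ω) ∂μ
      = ∫ ω in D, (1 - (μ[Z | σ⟮X⟯]) ω) ∂μ := by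
    rw [← setIntegral_condExp hX.comap_le h1Zi hD]
    exact setIntegral_congr_ae hDm (hce.mono fun ω h _ => h)
  have hzero : (fun ω => (1:ℝ) - (μ[Z | σ⟮X⟯]) ω) =ᵐ[μ.restrict D] 0 := by
    have hnn : 0 ≤ᵐ[μ.restrict D] (fun ω => (1:ℝ) - (μ[Z | σ⟮X⟯]) ω) :=
      ae_restrict_of_ae (hoverlap.mono fun ω h => by
        simp only [Pi.zero_apply]; linarith)
    have hint : IntegrableOn (fun ω => (1:ℝ) - (μ[Z | σ⟮X⟯]) ω) D μ :=
      ((integrable_const 1).sub integrable_condExp).integrableOn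
    refine (setIntegral_eq_zero_iff_of_nonneg_ae hnn hint).mp ?_
    rw [← hA2, hA1, h0]
    simp
  have hpos : ∀ᵐ ω ∂μ.restrict D, (0:ℝ) < 1 - (μ[Z | σ⟮X⟯]) ω :=
    ae_restrict_of_ae (hoverlap.mono fun ω h => by linarith)
  have hFalse : ∀ᵐ _ω ∂μ.restrict D, False := by
    filter_upwards [hzero, hpos] with ω h1 h2
    have h1' : (1:ℝ) - (μ[Z | σ⟮X⟯]) ω = 0 := h1
    rw [h1'] at h2
    exact lt_irrefl _ h2
  have := ae_iff.mp hFalse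
  simp only [not_false_iff, Set.setOf_true] at this
  rwa [Measure.restrict_apply_univ] at this

lemma s0_ne_zero
    [mΩ : MeasurableSpace Ω] [MeasurableSpace 𝓧]
    {μ : Measure Ω} [IsProbabilityMeasure μ]
    {Z : Ω → ℝ} {X : Ω → 𝓧}
    (hZ : Measurable Z) (hX : Measurable X)
    (hZb : ∀ ω, Z ω = 0 ∨ Z ω = 1)
    (hoverlap : ∀ᵐ ω ∂μ, (μ[Z | σ⟮X⟯]) ω < 1) :
    μ {ω | Z ω = 0} ≠ 0 := by
  intro h
  have := null_of_null_inter hZ hX hZb hoverlap Set.univ MeasurableSet.univ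
    (by rwa [Set.univ_inter])
  simp [measure_univ] at this

end Aux2

section Aux3

variable {Ω β 𝓧 : Type*}

lemma cond_condexp_ae_eq_s8
    [mΩ : MeasurableSpace Ω] [StandardBorelSpace Ω] [MeasurableSpace β] [MeasurableSpace 𝓧]
    {μ : Measure Ω} [IsProbabilityMeasure μ]
    {q : Ω → β} {Z : Ω → ℝ} {X : Ω → 𝓧}
    (hq : Measurable q) (hZ : Measurable Z) (hX : Measurable X)
    (hZb : ∀ ω, Z ω = 0 ∨ Z ω = 1)
    (hoverlap : ∀ᵐ ω ∂μ, (μ[Z | σ⟮X⟯]) ω < 1)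
    (hind : CondIndepFun σ⟮X⟯ hX.comap_le q Z μ)
    {u : β → ℝ} (hu : Measurable u) (hU : Integrable (u ∘ q) μ)
    {F : Ω → ℝ} (hF : Integrable F μ)
    (hFeq : ∀ ω, Z ω = 0 → F ω = u (q ω)) :
    (μ[|{ω | Z ω = 0}])[F | σ⟮X⟯] =ᵐ[μ] μ[u ∘ q | σ⟮X⟯] := by
  have hs0m : MeasurableSet {ω | Z ω = 0} := hZ (measurableSet_singleton 0)
  have hs0 : μ {ω | Z ω = 0} ≠ 0 := s0_ne_zero hZ hX hZb hoverlap
  have hcond : μ[|{ω | Z ω = 0}]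
      = (μ {ω | Z ω = 0})⁻¹ • μ.restrict {ω | Z ω = 0} := rfl
  haveI : IsProbabilityMeasure (μ[|{ω | Z ω = 0}]) := cond_isProbabilityMeasure hs0
  have hinv_ne_top : (μ {ω | Z ω = 0})⁻¹ ≠ ⊤ := ENNReal.inv_ne_top.mpr hs0
  have hcondint : ∀ {G : Ω → ℝ}, Integrable G μ → Integrable G (μ[|{ω | Z ω = 0}]) := by
    intro G hG
    rw [hcond]
    exact (hG.restrict).smul_measure hinv_ne_top
  have hZi : Integrable Z μ := integrable_of_binary hZ hZb
  have hZnorm : ∀ (f : Ω → ℝ) ω, ‖f ω * Z ω‖ ≤ ‖f ω‖ := by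
    intro f ω
    rw [norm_mul]
    rcases hZb ω with h | h <;> simp [h]
  have hgZ : Integrable (fun ω => (μ[u ∘ q | σ⟮X⟯]) ω * Z ω) μ := by
    refine (integrable_condExp (f := u ∘ q) (m := σ⟮X⟯) (μ := μ)).mono
      (((stronglyMeasurable_condExp.mono hX.comap_le).aestronglyMeasurable).mul
        hZ.aestronglyMeasurable) (Filter.Eventually.of_forall fun ω => ?_)
    exact hZnorm _ ω
  have hUZ : Integrable (fun ω => u (q ω) * Z ω) μ := by
    refine hU.mono (((hu.comp hq).aestronglyMeasurable).mul hZ.aestronglyMeasurable)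
      (Filter.Eventually.of_forall fun ω => ?_)
    rw [norm_mul]
    rcases hZb ω with h | h <;> simp [h, Function.comp]
  -- set-integral equality over the conditional measure
  have hsetint : ∀ A, MeasurableSet[σ⟮X⟯] A →
      ∫ ω in A, (μ[u ∘ q | σ⟮X⟯]) ω ∂(μ[|{ω | Z ω = 0}])
        = ∫ ω in A, F ω ∂(μ[|{ω | Z ω = 0}]) := by
    intro A hA
    have hAm : MeasurableSet A := hX.comap_le A hA
    have hrestr : ∀ (G : Ω → ℝ), ∫ ω in A, G ω ∂(μ[|{ω | Z ω = 0}])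
        = ((μ {ω | Z ω = 0})⁻¹).toReal * ∫ ω in A ∩ {ω | Z ω = 0}, G ω ∂μ := by
      intro G
      rw [hcond, Measure.restrict_smul, integral_smul_measure,
        Measure.restrict_restrict hAm, smul_eq_mul]
    rw [hrestr, hrestr]
    congr 1
    have hindic : ∀ (G : Ω → ℝ), ∫ ω in A ∩ {ω | Z ω = 0}, G ω ∂μ
        = ∫ ω in A, ({ω | Z ω = 0}.indicator G) ω ∂μ :=
      fun G => (setIntegral_indicator hs0m).symm
    rw [hindic, hindic]
    have hleft : ∫ ω in A, ({ω | Z ω = 0}.indicator (μ[u ∘ q | σ⟮X⟯])) ω ∂μ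
        = (∫ ω in A, (u ∘ q) ω ∂μ) - ∫ ω in A, u (q ω) * Z ω ∂μ := by
      rw [← setIntegral_condExp hX.comap_le hU hA,
        ← setIntegral_condExp_mul_binary hq hZ hX hZb hu hU hind hA,
        ← integral_sub (integrable_condExp.integrableOn) (hgZ.integrableOn)]
      refine setIntegral_congr_ae hAm (Filter.Eventually.of_forall fun ω _ => ?_)
      rcases hZb ω with h | h
      · have hmem : ω ∈ {ω | Z ω = 0} := h
        simp [Set.indicator_of_mem hmem, h]
      · have hmem : ω ∉ {ω | Z ω = 0} := by simp [Set.mem_setOf_eq, h]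
        simp [Set.indicator_of_notMem hmem, h]
    have hright : ∫ ω in A, ({ω | Z ω = 0}.indicator F) ω ∂μ
        = (∫ ω in A, (u ∘ q) ω ∂μ) - ∫ ω in A, u (q ω) * Z ω ∂μ := by
      rw [← integral_sub (hU.integrableOn) (hUZ.integrableOn)]
      refine setIntegral_congr_ae hAm (Filter.Eventually.of_forall fun ω _ => ?_)
      rcases hZb ω with h | h
      · have hmem : ω ∈ {ω | Z ω = 0} := h
        simp [Set.indicator_of_mem hmem, hFeq ω h, h, Function.comp]
      · have hmem : ω ∉ {ω | Z ω = 0} := by simp [Set.mem_setOf_eq, h]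
        simp [Set.indicator_of_notMem hmem, h, Function.comp]
    rw [hleft, hright]
  -- uniqueness of conditional expectation
  have huniq : μ[u ∘ q | σ⟮X⟯] =ᵐ[μ[|{ω | Z ω = 0}]] (μ[|{ω | Z ω = 0}])[F | σ⟮X⟯] := by
    refine ae_eq_condExp_of_forall_setIntegral_eq hX.comap_le (hcondint hF)
      (fun s _ _ => ((hcondint integrable_condExp).integrableOn))
      (fun s hs _ => hsetint s hs)
      stronglyMeasurable_condExp.aestronglyMeasurable
  -- transfer from the conditional measure to μ
  have hD : MeasurableSet[σ⟮X⟯]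
      {ω | ¬ ((μ[|{ω | Z ω = 0}])[F | σ⟮X⟯]) ω = (μ[u ∘ q | σ⟮X⟯]) ω} := by
    have h1 : Measurable[σ⟮X⟯] ((μ[|{ω | Z ω = 0}])[F | σ⟮X⟯]) :=
      stronglyMeasurable_condExp.measurable
    have h2 : Measurable[σ⟮X⟯] (μ[u ∘ q | σ⟮X⟯]) := stronglyMeasurable_condExp.measurable
    have := (measurableSet_eq_fun h1 h2).compl
    rwa [Set.compl_setOf] at this
  have hν0 : (μ[|{ω | Z ω = 0}])
      {ω | ¬ ((μ[|{ω | Z ω = 0}])[F | σ⟮X⟯]) ω = (μ[u ∘ q | σ⟮X⟯]) ω} = 0 :=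
    ae_iff.mp huniq.symm
  have hμ0 : μ ({ω | ¬ ((μ[|{ω | Z ω = 0}])[F | σ⟮X⟯]) ω = (μ[u ∘ q | σ⟮X⟯]) ω}
      ∩ {ω | Z ω = 0}) = 0 := by
    rw [cond_apply hs0m] at hν0
    rcases mul_eq_zero.mp hν0 with h | h
    · exact absurd h (ENNReal.inv_ne_zero.mpr (measure_ne_top μ _))
    · rwa [Set.inter_comm] at h
  have hD0 := null_of_null_inter hZ hX hZb hoverlap _ hD hμ0
  exact ae_iff.mpr hD0

end Aux3

/-- (Theorem 2: identification of LATT.) Under conditional independence given `X`,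
monotonicity, existence of compliers, one-sided overlap `P(Z=1|X) < 1` a.s. and
`P(Z=1) > 0`, the LATT satisfies
`τ_LATT = (E[Y|Z=1] - E[μ₀(X)|Z=1]) / (E[W|Z=1] - E[ρ₀(X)|Z=1])`. -/
theorem latt_identification
    {Ω 𝓧 : Type*} [MeasurableSpace Ω] [StandardBorelSpace Ω] [MeasurableSpace 𝓧]
    (μ : Measure Ω) [IsProbabilityMeasure μ]
    (Y0 Y1 W0 W1 Z : Ω → ℝ) (X : Ω → 𝓧)
    (hY0m : Measurable Y0) (hY1m : Measurable Y1)
    (hW0m : Measurable W0) (hW1m : Measurable W1)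
    (hZm : Measurable Z) (hX : Measurable X)
    (hY0 : Integrable Y0 μ) (hY1 : Integrable Y1 μ)
    (hW0b : ∀ ω, W0 ω = 0 ∨ W0 ω = 1) (hW1b : ∀ ω, W1 ω = 0 ∨ W1 ω = 1)
    (hZb : ∀ ω, Z ω = 0 ∨ Z ω = 1)
    (W Y : Ω → ℝ)
    (hWdef : W = fun ω => Z ω * W1 ω + (1 - Z ω) * W0 ω)
    (hYdef : Y = fun ω => W ω * Y1 ω + (1 - W ω) * Y0 ω)
    (hindep : CondIndepFun (MeasurableSpace.comap X inferInstance) hX.comap_le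
      (fun ω => (Y0 ω, Y1 ω, W0 ω, W1 ω)) Z μ)
    (hmono : ∀ᵐ ω ∂μ, W0 ω ≤ W1 ω)
    (hcomp : 0 < μ {ω | W0 ω < W1 ω})
    (hoverlap : ∀ᵐ ω ∂μ, (μ[Z | MeasurableSpace.comap X inferInstance]) ω < 1)
    (hZ1 : 0 < μ {ω | Z ω = 1}) :
    ∫ ω, (Y1 ω - Y0 ω) ∂μ[|{ω | W0 ω < W1 ω ∧ W ω = 1}]
      = ((∫ ω, Y ω ∂μ[|{ω' | Z ω' = 1}]) -
          ∫ ω, ((μ[|{ω' | Z ω' = 0}])[Y | MeasurableSpace.comap X inferInstance]) ω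
            ∂μ[|{ω' | Z ω' = 1}])
        / ((∫ ω, W ω ∂μ[|{ω' | Z ω' = 1}]) -
            ∫ ω, ((μ[|{ω' | Z ω' = 0}])[W | MeasurableSpace.comap X inferInstance]) ω
              ∂μ[|{ω' | Z ω' = 1}]) := by
  set q : Ω → ℝ × ℝ × ℝ × ℝ := fun ω => (Y0 ω, Y1 ω, W0 ω, W1 ω) with hqdef
  have hq : Measurable q := (hY0m.prodMk (hY1m.prodMk (hW0m.prodMk hW1m)))
  -- measurability of the u-functions
  have hu0 : Measurable (fun p : ℝ × ℝ × ℝ × ℝ => p.2.2.1 * p.2.1 + (1 - p.2.2.1) * p.1) := by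
    fun_prop
  have hu1 : Measurable (fun p : ℝ × ℝ × ℝ × ℝ => p.2.2.2 * p.2.1 + (1 - p.2.2.2) * p.1) := by
    fun_prop
  have hw0 : Measurable (fun p : ℝ × ℝ × ℝ × ℝ => p.2.2.1) := by fun_prop
  have hw1 : Measurable (fun p : ℝ × ℝ × ℝ × ℝ => p.2.2.2) := by fun_prop
  -- measurability and binary facts for W, Y
  have hWm : Measurable W := by
    rw [hWdef]; exact (hZm.mul hW1m).add ((measurable_const.sub hZm).mul hW0m)
  have hYm : Measurable Y := by
    rw [hYdef]; exact (hWm.mul hY1m).add ((measurable_const.sub hWm).mul hY0m)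
  have hWb : ∀ ω, W ω = 0 ∨ W ω = 1 := by
    intro ω
    rw [hWdef]
    rcases hZb ω with h | h <;> rcases hW0b ω with h0 | h0 <;> rcases hW1b ω with h1 | h1 <;>
      simp [h, h0, h1]
  -- integrability facts
  have hsum : Integrable (fun ω => ‖Y0 ω‖ + ‖Y1 ω‖) μ := hY0.norm.add hY1.norm
  have hnormsum : ∀ ω, ‖(fun ω => ‖Y0 ω‖ + ‖Y1 ω‖) ω‖ = ‖Y0 ω‖ + ‖Y1 ω‖ := fun ω =>
    Real.norm_of_nonneg (by positivity)
  have hU0 : Integrable (fun ω => W0 ω * Y1 ω + (1 - W0 ω) * Y0 ω) μ := by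
    refine hsum.mono ((hW0m.mul hY1m).add
      ((measurable_const.sub hW0m).mul hY0m)).aestronglyMeasurable
      (Filter.Eventually.of_forall fun ω => ?_)
    rw [hnormsum ω]
    rcases hW0b ω with h | h <;>
      simp [h, abs_le, Real.norm_eq_abs, le_abs_self, abs_nonneg] <;>
      cases' abs_cases (Y0 ω) with h' h' <;> cases' abs_cases (Y1 ω) with h'' h'' <;>
      linarith
  have hU1 : Integrable (fun ω => W1 ω * Y1 ω + (1 - W1 ω) * Y0 ω) μ := by
    refine hsum.mono ((hW1m.mul hY1m).add
      ((measurable_const.sub hW1m).mul hY0m)).aestronglyMeasurable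
      (Filter.Eventually.of_forall fun ω => ?_)
    rw [hnormsum ω]
    rcases hW1b ω with h | h <;>
      simp [h, abs_le, Real.norm_eq_abs, le_abs_self, abs_nonneg] <;>
      cases' abs_cases (Y0 ω) with h' h' <;> cases' abs_cases (Y1 ω) with h'' h'' <;>
      linarith
  have hW0i : Integrable W0 μ := integrable_of_binary hW0m hW0b
  have hW1i : Integrable W1 μ := integrable_of_binary hW1m hW1b
  have hWi : Integrable W μ := integrable_of_binary hWm hWb
  have hYi : Integrable Y μ := by
    refine hsum.mono hYm.aestronglyMeasurable (Filter.Eventually.of_forall fun ω => ?_)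
    rw [hnormsum ω, hYdef]
    rcases hWb ω with h | h <;>
      simp [h, Real.norm_eq_abs] <;>
      cases' abs_cases (Y0 ω) with h' h' <;> cases' abs_cases (Y1 ω) with h'' h'' <;>
      linarith
  have hmulZint : ∀ {G : Ω → ℝ}, Integrable G μ → Measurable G →
      Integrable (fun ω => G ω * Z ω) μ := by
    intro G hG hGm
    refine hG.mono (hGm.mul hZm).aestronglyMeasurable
      (Filter.Eventually.of_forall fun ω => ?_)
    rw [norm_mul]
    rcases hZb ω with h | h <;> simp [h]
  have hU0Z : Integrable (fun ω => (W0 ω * Y1 ω + (1 - W0 ω) * Y0 ω) * Z ω) μ :=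
    hmulZint hU0 ((hW0m.mul hY1m).add ((measurable_const.sub hW0m).mul hY0m))
  have hU1Z : Integrable (fun ω => (W1 ω * Y1 ω + (1 - W1 ω) * Y0 ω) * Z ω) μ :=
    hmulZint hU1 ((hW1m.mul hY1m).add ((measurable_const.sub hW1m).mul hY0m))
  have hW0Z : Integrable (fun ω => W0 ω * Z ω) μ := hmulZint hW0i hW0m
  have hW1Z : Integrable (fun ω => W1 ω * Z ω) μ := hmulZint hW1i hW1m
  -- pointwise identities
  have hYeq0 : ∀ ω, Z ω = 0 → Y ω = W0 ω * Y1 ω + (1 - W0 ω) * Y0 ω := by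
    intro ω h
    simp only [hYdef, hWdef, h]
    ring
  have hYeq1 : ∀ ω, Z ω = 1 → Y ω = W1 ω * Y1 ω + (1 - W1 ω) * Y0 ω := by
    intro ω h
    simp only [hYdef, hWdef, h]
    ring
  have hWeq0 : ∀ ω, Z ω = 0 → W ω = W0 ω := by
    intro ω h
    simp only [hWdef, h]
    ring
  have hWeq1 : ∀ ω, Z ω = 1 → W ω = W1 ω := by
    intro ω h
    simp only [hWdef, h]
    ring
  -- basic sets
  have hs1m : MeasurableSet {ω' | Z ω' = 1} := hZm (measurableSet_singleton 1)
  have hCm : MeasurableSet {ω | W0 ω < W1 ω} := measurableSet_lt hW0m hW1m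
  have hCs1m : MeasurableSet ({ω | W0 ω < W1 ω} ∩ {ω' | Z ω' = 1}) := hCm.inter hs1m
  have h01 : ∀ ω, W0 ω < W1 ω → W0 ω = 0 ∧ W1 ω = 1 := by
    intro ω hlt
    rcases hW0b ω with h0 | h0 <;> rcases hW1b ω with h1 | h1 <;>
      rw [h0, h1] at hlt <;> norm_num at hlt <;> exact ⟨h0, h1⟩
  have hWZof : ∀ ω, W0 ω < W1 ω → W ω = Z ω := by
    intro ω hlt
    rcases h01 ω hlt with ⟨h0, h1⟩
    simp only [hWdef, h0, h1]
    ring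
  have hSeq : {ω | W0 ω < W1 ω ∧ W ω = 1}
      = {ω | W0 ω < W1 ω} ∩ {ω' | Z ω' = 1} := by
    ext ω
    simp only [Set.mem_setOf_eq, Set.mem_inter_iff]
    constructor
    · rintro ⟨hlt, hw⟩
      exact ⟨hlt, by rw [← hWZof ω hlt]; exact hw⟩
    · rintro ⟨hlt, hz⟩
      exact ⟨hlt, by rw [hWZof ω hlt]; exact hz⟩
  -- main conversion for integrals over the conditional measure on {Z = 1}
  have hc : (μ {ω' | Z ω' = 1}).toReal ≠ 0 :=
    ENNReal.toReal_ne_zero.mpr ⟨hZ1.ne', measure_ne_top μ _⟩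
  have hconv : ∀ G : Ω → ℝ, ∫ ω, G ω ∂μ[|{ω' | Z ω' = 1}]
      = ((μ {ω' | Z ω' = 1}).toReal)⁻¹ * ∫ ω, G ω * Z ω ∂μ := by
    intro G
    have h1 : μ[|{ω' | Z ω' = 1}]
        = (μ {ω' | Z ω' = 1})⁻¹ • μ.restrict {ω' | Z ω' = 1} := rfl
    rw [h1, integral_smul_measure, ENNReal.toReal_inv, ← integral_indicator hs1m,
      smul_eq_mul]
    congr 1
    refine integral_congr_ae (Filter.Eventually.of_forall fun ω => ?_)
    rcases hZb ω with h | h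
    · have hmem : ω ∉ {ω' | Z ω' = 1} := by simp [Set.mem_setOf_eq, h]
      simp [Set.indicator_of_notMem hmem, h]
    · have hmem : ω ∈ {ω' | Z ω' = 1} := h
      simp [Set.indicator_of_mem hmem, h]
  -- the four integrals
  have hA1 : ∫ ω, Y ω ∂μ[|{ω' | Z ω' = 1}]
      = ((μ {ω' | Z ω' = 1}).toReal)⁻¹
        * ∫ ω, (W1 ω * Y1 ω + (1 - W1 ω) * Y0 ω) * Z ω ∂μ := by
    rw [hconv Y]
    congr 1
    refine integral_congr_ae (Filter.Eventually.of_forall fun ω => ?_)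
    rcases hZb ω with h | h
    · show Y ω * Z ω = (W1 ω * Y1 ω + (1 - W1 ω) * Y0 ω) * Z ω
      simp [h]
    · show Y ω * Z ω = (W1 ω * Y1 ω + (1 - W1 ω) * Y0 ω) * Z ω
      rw [hYeq1 ω h]
  have hB1 : ∫ ω, W ω ∂μ[|{ω' | Z ω' = 1}]
      = ((μ {ω' | Z ω' = 1}).toReal)⁻¹ * ∫ ω, W1 ω * Z ω ∂μ := by
    rw [hconv W]
    congr 1
    refine integral_congr_ae (Filter.Eventually.of_forall fun ω => ?_)
    rcases hZb ω with h | h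
    · show W ω * Z ω = W1 ω * Z ω
      simp [h]
    · show W ω * Z ω = W1 ω * Z ω
      rw [hWeq1 ω h]
  have hcondY : (μ[|{ω' | Z ω' = 0}])[Y | MeasurableSpace.comap X inferInstance]
      =ᵐ[μ] μ[(fun ω => W0 ω * Y1 ω + (1 - W0 ω) * Y0 ω)
        | MeasurableSpace.comap X inferInstance] :=
    cond_condexp_ae_eq_s8 hq hZm hX hZb hoverlap hindep hu0 hU0 hYi hYeq0
  have hcondW : (μ[|{ω' | Z ω' = 0}])[W | MeasurableSpace.comap X inferInstance]
      =ᵐ[μ] μ[(fun ω => W0 ω) | MeasurableSpace.comap X inferInstance] :=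
    cond_condexp_ae_eq_s8 hq hZm hX hZb hoverlap hindep hw0 hW0i hWi hWeq0
  have hstar0 : ∫ ω, (μ[(fun ω => W0 ω * Y1 ω + (1 - W0 ω) * Y0 ω)
        | MeasurableSpace.comap X inferInstance]) ω * Z ω ∂μ
      = ∫ ω, (W0 ω * Y1 ω + (1 - W0 ω) * Y0 ω) * Z ω ∂μ := by
    have h := setIntegral_condExp_mul_binary hq hZm hX hZb hu0 hU0 hindep
      (A := Set.univ) MeasurableSet.univ
    rw [Measure.restrict_univ] at h
    exact h
  have hstarw : ∫ ω, (μ[(fun ω => W0 ω)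
        | MeasurableSpace.comap X inferInstance]) ω * Z ω ∂μ
      = ∫ ω, W0 ω * Z ω ∂μ := by
    have h := setIntegral_condExp_mul_binary hq hZm hX hZb hw0 hW0i hindep
      (A := Set.univ) MeasurableSet.univ
    rw [Measure.restrict_univ] at h
    exact h
  have hA2 : ∫ ω, ((μ[|{ω' | Z ω' = 0}])[Y | MeasurableSpace.comap X inferInstance]) ω
        ∂μ[|{ω' | Z ω' = 1}]
      = ((μ {ω' | Z ω' = 1}).toReal)⁻¹
        * ∫ ω, (W0 ω * Y1 ω + (1 - W0 ω) * Y0 ω) * Z ω ∂μ := by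
    rw [integral_congr_ae (hcondY.filter_mono
      (ProbabilityTheory.cond_absolutelyContinuous).ae_le), hconv _, hstar0]
  have hB2 : ∫ ω, ((μ[|{ω' | Z ω' = 0}])[W | MeasurableSpace.comap X inferInstance]) ω
        ∂μ[|{ω' | Z ω' = 1}]
      = ((μ {ω' | Z ω' = 1}).toReal)⁻¹ * ∫ ω, W0 ω * Z ω ∂μ := by
    rw [integral_congr_ae (hcondW.filter_mono
      (ProbabilityTheory.cond_absolutelyContinuous).ae_le), hconv _, hstarw]
  -- identification of the numerator and denominator
  have hJ : (∫ ω, (W1 ω * Y1 ω + (1 - W1 ω) * Y0 ω) * Z ω ∂μ)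
        - ∫ ω, (W0 ω * Y1 ω + (1 - W0 ω) * Y0 ω) * Z ω ∂μ
      = ∫ ω, ({ω | W0 ω < W1 ω} ∩ {ω' | Z ω' = 1}).indicator
          (fun ω => Y1 ω - Y0 ω) ω ∂μ := by
    rw [← integral_sub hU1Z hU0Z]
    refine integral_congr_ae (hmono.mono fun ω hω => ?_)
    rcases hZb ω with h | h
    · have hmem : ω ∉ {ω | W0 ω < W1 ω} ∩ {ω' | Z ω' = 1} := by
        simp [Set.mem_inter_iff, Set.mem_setOf_eq, h]
      simp [Set.indicator_of_notMem hmem, h]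
    · rcases hW0b ω with h0 | h0 <;> rcases hW1b ω with h1 | h1
      · have hmem : ω ∉ {ω | W0 ω < W1 ω} ∩ {ω' | Z ω' = 1} := by
          simp [Set.mem_inter_iff, Set.mem_setOf_eq, h0, h1]
        simp [Set.indicator_of_notMem hmem, h, h0, h1]
      · have hmem : ω ∈ {ω | W0 ω < W1 ω} ∩ {ω' | Z ω' = 1} := by
          constructor
          · show W0 ω < W1 ω
            rw [h0, h1]; norm_num
          · exact h
        simp only [Set.indicator_of_mem hmem, h, h0, h1]
        ring
      · exfalso
        rw [h0, h1] at hω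
        norm_num at hω
      · have hmem : ω ∉ {ω | W0 ω < W1 ω} ∩ {ω' | Z ω' = 1} := by
          simp [Set.mem_inter_iff, Set.mem_setOf_eq, h0, h1]
        simp [Set.indicator_of_notMem hmem, h, h0, h1]
  have hK : (∫ ω, W1 ω * Z ω ∂μ) - ∫ ω, W0 ω * Z ω ∂μ
      = (μ ({ω | W0 ω < W1 ω} ∩ {ω' | Z ω' = 1})).toReal := by
    rw [← integral_sub hW1Z hW0Z]
    have heq : ∫ ω, (W1 ω * Z ω - W0 ω * Z ω) ∂μ
        = ∫ ω, ({ω | W0 ω < W1 ω} ∩ {ω' | Z ω' = 1}).indicator (fun _ => (1:ℝ)) ω ∂μ := by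
      refine integral_congr_ae (hmono.mono fun ω hω => ?_)
      rcases hZb ω with h | h
      · have hmem : ω ∉ {ω | W0 ω < W1 ω} ∩ {ω' | Z ω' = 1} := by
          simp [Set.mem_inter_iff, Set.mem_setOf_eq, h]
        simp [Set.indicator_of_notMem hmem, h]
      · rcases hW0b ω with h0 | h0 <;> rcases hW1b ω with h1 | h1
        · have hmem : ω ∉ {ω | W0 ω < W1 ω} ∩ {ω' | Z ω' = 1} := by
            simp [Set.mem_inter_iff, Set.mem_setOf_eq, h0, h1]
          simp [Set.indicator_of_notMem hmem, h, h0, h1]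
        · have hmem : ω ∈ {ω | W0 ω < W1 ω} ∩ {ω' | Z ω' = 1} := by
            constructor
            · show W0 ω < W1 ω
              rw [h0, h1]; norm_num
            · exact h
          simp [Set.indicator_of_mem hmem, h, h0, h1]
        · exfalso
          rw [h0, h1] at hω
          norm_num at hω
        · have hmem : ω ∉ {ω | W0 ω < W1 ω} ∩ {ω' | Z ω' = 1} := by
            simp [Set.mem_inter_iff, Set.mem_setOf_eq, h0, h1]
          simp [Set.indicator_of_notMem hmem, h, h0, h1]
    rw [heq, integral_indicator_const (1:ℝ) hCs1m, smul_eq_mul, mul_one]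
    rfl
  -- left-hand side
  have hLHS : ∫ ω, (Y1 ω - Y0 ω) ∂μ[|{ω | W0 ω < W1 ω ∧ W ω = 1}]
      = ((μ ({ω | W0 ω < W1 ω} ∩ {ω' | Z ω' = 1})).toReal)⁻¹
        * ∫ ω, ({ω | W0 ω < W1 ω} ∩ {ω' | Z ω' = 1}).indicator
            (fun ω => Y1 ω - Y0 ω) ω ∂μ := by
    rw [hSeq]
    have h1 : μ[|{ω | W0 ω < W1 ω} ∩ {ω' | Z ω' = 1}]
        = (μ ({ω | W0 ω < W1 ω} ∩ {ω' | Z ω' = 1}))⁻¹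
          • μ.restrict ({ω | W0 ω < W1 ω} ∩ {ω' | Z ω' = 1}) := rfl
    rw [h1, integral_smul_measure, ENNReal.toReal_inv, ← integral_indicator hCs1m,
      smul_eq_mul]
  -- final algebra
  rw [hLHS, hA1, hA2, hB1, hB2, ← mul_sub, ← mul_sub, hJ, hK,
    mul_div_mul_left _ _ (inv_ne_zero hc), div_eq_inv_mul]
end

section
/- (Consistency side 2 of double robustness for LATE) Suppose the instrument propensity score is correctly specified, i.e., G(X, γ*) = η(X) = P(Z=1|X) a.s. with 0 < G(X,γ*) < 1, and suppose (α₁*, β₁*) satisfy the population moment condition E[ (Z/G(X,γ*)) (Y − m(α₁* + Xβ₁*)) ] = 0. Then E[m(α₁* + Xβ₁*)] = E[μ₁(X)] = θ₁, even if m(α₁* + Xβ₁*) differs from μ₁(X). -/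
open MeasureTheory ProbabilityTheory
open scoped ENNReal

/-- (Consistency side 2 of double robustness for LATE.) If the instrument propensity
score is correctly specified, `G(X,γ*) = P(Z=1|X)` a.s. with `0 < G(X,γ*) < 1`, and the
population moment condition `E[(Z/G(X))(Y - m(α₁* + Xβ₁*))] = 0` holds, then
`E[m(α₁* + Xβ₁*)] = E[μ₁(X)] = θ₁`, even if the mean function is misspecified. -/
theorem dr_propensity_correct_side_late
    {Ω : Type*} [MeasurableSpace Ω] (μ : Measure Ω) [IsProbabilityMeasure μ] {d : ℕ}
    (Y Z : Ω → ℝ) (X : Ω → Fin d → ℝ)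
    (hYm : Measurable Y) (hY : Integrable Y μ)
    (hZm : Measurable Z) (hZb : ∀ ω, Z ω = 0 ∨ Z ω = 1)
    (hX : Measurable X)
    (G : (Fin d → ℝ) → ℝ) (hG : Measurable G)
    (hGrange : ∀ᵐ ω ∂μ, 0 < G (X ω) ∧ G (X ω) < 1)
    (hGcorrect : μ[Z | MeasurableSpace.comap X inferInstance]
      =ᵐ[μ] fun ω => G (X ω))
    (m : ℝ → ℝ) (hm : Measurable m) (α : ℝ) (β : Fin d → ℝ)
    (hmInt : Integrable (fun ω => m (α + ∑ i, β i * X ω i)) μ)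
    (hwInt : Integrable
      (fun ω => (Z ω / G (X ω)) * (Y ω - m (α + ∑ i, β i * X ω i))) μ)
    (hμ1Int : Integrable
      ((μ[|{ω | Z ω = 1}])[Y | MeasurableSpace.comap X inferInstance]) μ)
    (hZ1 : 0 < μ {ω | Z ω = 1})
    (hmoment : ∫ ω, (Z ω / G (X ω)) * (Y ω - m (α + ∑ i, β i * X ω i)) ∂μ = 0) :
    ∫ ω, m (α + ∑ i, β i * X ω i) ∂μ
      = ∫ ω, ((μ[|{ω' | Z ω' = 1}])[Y | MeasurableSpace.comap X inferInstance]) ω ∂μ := by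
  classical
  have hle : MeasurableSpace.comap X inferInstance ≤ ‹MeasurableSpace Ω› := hX.comap_le
  set f : Ω → ℝ := fun ω => m (α + ∑ i, β i * X ω i) with hfdef
  set t : Set Ω := {ω | Z ω = 1} with htdef
  have ht : MeasurableSet t := hZm (measurableSet_singleton 1)
  have hc0 : μ t ≠ 0 := hZ1.ne'
  have hctop : μ t ≠ ∞ := measure_ne_top _ _
  haveI hPM : IsProbabilityMeasure (μ[|t]) := cond_isProbabilityMeasure hc0
  set μ1 : Ω → ℝ := (μ[|t])[Y | (MeasurableSpace.comap X inferInstance)] with hμ1def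
  -- measurability helpers
  have hXσ : Measurable[(MeasurableSpace.comap X inferInstance)] X := fun s hs => ⟨s, hs, rfl⟩
  have hGσ : Measurable[(MeasurableSpace.comap X inferInstance)] fun ω => G (X ω) := hG.comp hXσ
  have hfσ : Measurable[(MeasurableSpace.comap X inferInstance)] f := by
    have hg : Measurable fun x : Fin d → ℝ => m (α + ∑ i, β i * x i) :=
      hm.comp (measurable_const.add (Finset.measurable_sum _ fun i _ =>
        (measurable_pi_apply i).const_mul _))
    exact hg.comp hXσ
  have hμ1σ : StronglyMeasurable[(MeasurableSpace.comap X inferInstance)] μ1 := stronglyMeasurable_condExp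
  -- Z as an indicator
  have hZind : ∀ (h : Ω → ℝ) ω, Z ω * h ω = t.indicator h ω := by
    intro h ω
    rcases hZb ω with h0 | h1
    · have hmem : ω ∉ t := by simp [htdef, h0]
      simp [Set.indicator_of_notMem hmem, h0]
    · have hmem : ω ∈ t := h1
      simp [Set.indicator_of_mem hmem, h1]
  have hZabs : ∀ ω, |Z ω| ≤ 1 := by intro ω; rcases hZb ω with h | h <;> simp [h]
  -- integrability facts
  have hZInt : Integrable Z μ := by
    refine Integrable.mono' (integrable_const 1) hZm.aestronglyMeasurable ?_
    exact Filter.Eventually.of_forall fun ω => by simpa using hZabs ω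
  have hZYInt : Integrable (fun ω => Z ω * Y ω) μ := by
    refine hY.abs.mono' (hZm.mul hYm).aestronglyMeasurable
      (Filter.Eventually.of_forall fun ω => ?_)
    rw [Real.norm_eq_abs, abs_mul]
    calc |Z ω| * |Y ω| ≤ 1 * |Y ω| := by
          exact mul_le_mul_of_nonneg_right (hZabs ω) (abs_nonneg _)
      _ = |Y ω| := one_mul _
  have hfm : Measurable f := hfσ.mono hle le_rfl
  have hμ1m : Measurable μ1 := hμ1σ.measurable.mono hle le_rfl
  have hZfInt : Integrable (fun ω => Z ω * f ω) μ := by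
    refine hmInt.abs.mono' (hZm.mul hfm).aestronglyMeasurable
      (Filter.Eventually.of_forall fun ω => ?_)
    rw [Real.norm_eq_abs, abs_mul]
    calc |Z ω| * |f ω| ≤ 1 * |f ω| :=
          mul_le_mul_of_nonneg_right (hZabs ω) (abs_nonneg _)
      _ = |f ω| := one_mul _
  have hZμ1Int : Integrable (fun ω => μ1 ω * Z ω) μ := by
    refine hμ1Int.abs.mono' (hμ1m.mul hZm).aestronglyMeasurable
      (Filter.Eventually.of_forall fun ω => ?_)
    rw [Real.norm_eq_abs, abs_mul]
    calc |μ1 ω| * |Z ω| ≤ |μ1 ω| * 1 :=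
          mul_le_mul_of_nonneg_left (hZabs ω) (abs_nonneg _)
      _ = |μ1 ω| := mul_one _
  have hGμ1Int : Integrable (fun ω => G (X ω) * μ1 ω) μ := by
    refine hμ1Int.abs.mono' ((hG.comp hX).mul hμ1m).aestronglyMeasurable ?_
    filter_upwards [hGrange] with ω hω
    rw [Real.norm_eq_abs, abs_mul]
    calc |G (X ω)| * |μ1 ω| ≤ 1 * |μ1 ω| := by
          refine mul_le_mul_of_nonneg_right ?_ (abs_nonneg _)
          rw [abs_of_pos hω.1]; exact hω.2.le
      _ = |μ1 ω| := one_mul _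
  have hY' : Integrable Y (μ[|t]) := by
    show Integrable Y ((μ t)⁻¹ • μ.restrict t)
    exact (hY.restrict).smul_measure (ENNReal.inv_ne_top.mpr hc0)
  -- indicator set-integral vs conditional measure
  have hcondInt : ∀ (h : Ω → ℝ) (s : Set Ω), MeasurableSet s →
      ∫ ω in s, t.indicator h ω ∂μ = (μ t).toReal * ∫ ω in s, h ω ∂(μ[|t]) := by
    intro h s hs
    have : ∫ ω in s, h ω ∂(μ[|t]) = (μ t).toReal⁻¹ * ∫ ω in s ∩ t, h ω ∂μ := by
      show ∫ ω in s, h ω ∂((μ t)⁻¹ • μ.restrict t) = _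
      rw [Measure.restrict_smul, integral_smul_measure, Measure.restrict_restrict hs,
        ENNReal.toReal_inv, smul_eq_mul]
    rw [this, setIntegral_indicator ht, ← mul_assoc,
      mul_inv_cancel₀ (ENNReal.toReal_ne_zero.mpr ⟨hc0, hctop⟩), one_mul]
  -- Step: E[ZY | σ(X)] = G(X) · μ₁ a.e.
  have hZY : (fun ω => G (X ω) * μ1 ω) =ᵐ[μ] μ[(fun ω => Z ω * Y ω) | (MeasurableSpace.comap X inferInstance)] := by
    refine ae_eq_condExp_of_forall_setIntegral_eq hle hZYInt
      (fun s _ _ => hGμ1Int.integrableOn) (fun s hs _ => ?_)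
      (StronglyMeasurable.aestronglyMeasurable (hGσ.mul hμ1σ.measurable).stronglyMeasurable)
    have hs' : MeasurableSet s := hle s hs
    -- RHS
    have hR : ∫ ω in s, Z ω * Y ω ∂μ = (μ t).toReal * ∫ ω in s, Y ω ∂(μ[|t]) := by
      rw [← hcondInt Y s hs']
      exact setIntegral_congr_ae hs'
        (Filter.Eventually.of_forall fun ω _ => hZind Y ω)
    -- pull-out for μ1 * Z
    have hpull : μ[(fun ω => μ1 ω * Z ω) | (MeasurableSpace.comap X inferInstance)] =ᵐ[μ] fun ω => μ1 ω * G (X ω) := by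
      have h1 : μ[μ1 * Z | (MeasurableSpace.comap X inferInstance)] =ᵐ[μ] μ1 * μ[Z | (MeasurableSpace.comap X inferInstance)] :=
        condExp_mul_of_stronglyMeasurable_left hμ1σ hZμ1Int hZInt
      refine h1.trans ?_
      filter_upwards [hGcorrect] with ω hω
      simp only [Pi.mul_apply, hω]
    have hL : ∫ ω in s, G (X ω) * μ1 ω ∂μ
        = (μ t).toReal * ∫ ω in s, μ1 ω ∂(μ[|t]) := by
      have e1 : ∫ ω in s, G (X ω) * μ1 ω ∂μ
          = ∫ ω in s, (μ[(fun ω => μ1 ω * Z ω) | (MeasurableSpace.comap X inferInstance)]) ω ∂μ := by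
        refine setIntegral_congr_ae hs' ?_
        filter_upwards [hpull] with ω hω _
        rw [hω, mul_comm]
      rw [e1, setIntegral_condExp hle hZμ1Int hs]
      rw [← hcondInt μ1 s hs']
      exact setIntegral_congr_ae hs'
        (Filter.Eventually.of_forall fun ω _ => by rw [mul_comm]; exact hZind μ1 ω)
    rw [hL, hR]
    congr 1
    exact (setIntegral_condExp hle hY' hs)
  -- pull-out for f * Z
  have hZf : μ[(fun ω => Z ω * f ω) | (MeasurableSpace.comap X inferInstance)] =ᵐ[μ] fun ω => f ω * G (X ω) := by
    have hfZInt : Integrable (f * Z) μ := by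
      refine hZfInt.congr (Filter.Eventually.of_forall fun ω => ?_)
      simp [Pi.mul_apply, mul_comm]
    have h1 : μ[f * Z | (MeasurableSpace.comap X inferInstance)] =ᵐ[μ] f * μ[Z | (MeasurableSpace.comap X inferInstance)] :=
      condExp_mul_of_stronglyMeasurable_left hfσ.stronglyMeasurable hfZInt hZInt
    have h2 : (fun ω => Z ω * f ω) = f * Z := funext fun ω => mul_comm _ _
    rw [h2]
    refine h1.trans ?_
    filter_upwards [hGcorrect] with ω hω
    simp only [Pi.mul_apply, hω]
  -- total decomposition of the weight function
  set W : Ω → ℝ := fun ω => (Z ω / G (X ω)) * (Y ω - f ω) with hWdef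
  have hZYfInt : Integrable (fun ω => Z ω * (Y ω - f ω)) μ := by
    have : (fun ω => Z ω * (Y ω - f ω)) = fun ω => Z ω * Y ω - Z ω * f ω :=
      funext fun ω => mul_sub _ _ _
    rw [this]; exact hZYInt.sub hZfInt
  have hWeq : W = (fun ω => (G (X ω))⁻¹) * (fun ω => Z ω * (Y ω - f ω)) := by
    funext ω; simp only [Pi.mul_apply, hWdef]; ring
  have hcond1 : μ[W | (MeasurableSpace.comap X inferInstance)]
      =ᵐ[μ] (fun ω => (G (X ω))⁻¹) * μ[(fun ω => Z ω * (Y ω - f ω)) | (MeasurableSpace.comap X inferInstance)] := by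
    rw [hWeq]
    exact condExp_mul_of_stronglyMeasurable_left hGσ.inv.stronglyMeasurable
      (hWeq ▸ hwInt) hZYfInt
  have hcond2 : μ[(fun ω => Z ω * (Y ω - f ω)) | (MeasurableSpace.comap X inferInstance)]
      =ᵐ[μ] μ[(fun ω => Z ω * Y ω) | (MeasurableSpace.comap X inferInstance)] - μ[(fun ω => Z ω * f ω) | (MeasurableSpace.comap X inferInstance)] := by
    have e : (fun ω => Z ω * (Y ω - f ω))
        = (fun ω => Z ω * Y ω) - fun ω => Z ω * f ω :=
      funext fun ω => by simp [mul_sub]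
    rw [e]
    exact condExp_sub hZYInt hZfInt _
  have hfinal : μ[W | (MeasurableSpace.comap X inferInstance)] =ᵐ[μ] fun ω => μ1 ω - f ω := by
    filter_upwards [hcond1, hcond2, hZY, hZf, hGrange] with ω h1 h2 h3 h4 h5
    have hG0 : G (X ω) ≠ 0 := ne_of_gt h5.1
    rw [h1]
    simp only [Pi.mul_apply, h2, Pi.sub_apply, h4, ← h3]
    field_simp
  have h0 : ∫ ω, W ω ∂μ = ∫ ω, (μ1 ω - f ω) ∂μ := by
    rw [← integral_condExp (f := W) hle]
    exact integral_congr_ae hfinal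
  have h1 : ∫ ω, (μ1 ω - f ω) ∂μ = (∫ ω, μ1 ω ∂μ) - ∫ ω, f ω ∂μ :=
    integral_sub hμ1Int hmInt
  have h2 : ∫ ω, W ω ∂μ = 0 := hmoment
  have h3 : (∫ ω, μ1 ω ∂μ) - ∫ ω, f ω ∂μ = 0 := by rw [← h1, ← h0]; exact h2
  linarith [h3]
end

section
/- (Double robustness for the LATT control mean, propensity-score side) Suppose G(X) = η(X) = P(Z=1|X) a.s. with η(X) < 1 a.s. and P(Z=1) > 0, and suppose (α₀*, β₀*) satisfy E{ [(1−Z)G(X)/(1−G(X))] (Y − m(α₀* + Xβ₀*)) } = 0. Then E[μ₀(X) | Z=1] = E[m(α₀* + Xβ₀*) | Z=1], regardless of whether m(α₀*+Xβ₀*) equals μ₀(X). -/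
open MeasureTheory ProbabilityTheory
open scoped ENNReal

section Aux

variable {Ω : Type*} {m0 : MeasurableSpace Ω}

lemma integrable_of_bounded01 (μ : Measure Ω) [IsProbabilityMeasure μ]
    {W : Ω → ℝ} (hWm : Measurable[m0] W) (hW0 : 0 ≤ᵐ[μ] W) (hW1 : ∀ᵐ ω ∂μ, W ω ≤ 1) :
    Integrable W μ := by
  refine Integrable.mono' (integrable_const (1:ℝ)) hWm.aestronglyMeasurable ?_
  filter_upwards [hW0, hW1] with ω h0 h1
  rw [Real.norm_eq_abs, abs_le]
  exact ⟨by simpa using (by linarith [show (0:ℝ) ≤ W ω from h0] : (-1:ℝ) ≤ W ω), h1⟩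

lemma lintegral_mul_condexp_aux (μ : Measure Ω) [IsProbabilityMeasure μ]
    {mX : MeasurableSpace Ω} (hle : mX ≤ m0)
    {W : Ω → ℝ} (hWm : Measurable[m0] W) (hW0 : 0 ≤ᵐ[μ] W) (hW1 : ∀ᵐ ω ∂μ, W ω ≤ 1)
    {g : Ω → ℝ≥0∞} (hg : Measurable[mX] g) :
    ∫⁻ ω, ENNReal.ofReal (W ω) * g ω ∂μ
      = ∫⁻ ω, ENNReal.ofReal ((μ[W|mX]) ω) * g ω ∂μ := by
  haveI := isFiniteMeasure_trim (μ := μ) hle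
  have hWi : Integrable W μ := integrable_of_bounded01 μ hWm hW0 hW1
  have hVm0 : Measurable[m0] (μ[W|mX]) := (stronglyMeasurable_condExp.mono hle).measurable
  have hkey : (μ.withDensity fun ω => ENNReal.ofReal (W ω)).trim hle
      = (μ.withDensity fun ω => ENNReal.ofReal ((μ[W|mX]) ω)).trim hle := by
    refine Measure.ext fun s hs => ?_
    have h1 : ∫⁻ ω in s, ENNReal.ofReal (W ω) ∂μ = ENNReal.ofReal (∫ ω in s, W ω ∂μ) :=
      (ofReal_integral_eq_lintegral_ofReal hWi.restrict (ae_restrict_of_ae hW0)).symm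
    have h2 : ∫⁻ ω in s, ENNReal.ofReal ((μ[W|mX]) ω) ∂μ
        = ENNReal.ofReal (∫ ω in s, (μ[W|mX]) ω ∂μ) :=
      (ofReal_integral_eq_lintegral_ofReal (integrable_condExp.restrict)
        (ae_restrict_of_ae (condExp_nonneg hW0))).symm
    rw [trim_measurableSet_eq hle hs, trim_measurableSet_eq hle hs,
      withDensity_apply _ (hle s hs), withDensity_apply _ (hle s hs), h1, h2,
      setIntegral_condExp hle hWi hs]
  have e1 : ∫⁻ ω, ENNReal.ofReal (W ω) * g ω ∂μ
      = ∫⁻ ω, g ω ∂(μ.withDensity fun ω => ENNReal.ofReal (W ω)) := by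
    rw [lintegral_withDensity_eq_lintegral_mul μ hWm.ennreal_ofReal (hg.mono hle le_rfl)]
    rfl
  have e2 : ∫⁻ ω, ENNReal.ofReal ((μ[W|mX]) ω) * g ω ∂μ
      = ∫⁻ ω, g ω ∂(μ.withDensity fun ω => ENNReal.ofReal ((μ[W|mX]) ω)) := by
    rw [lintegral_withDensity_eq_lintegral_mul μ hVm0.ennreal_ofReal (hg.mono hle le_rfl)]
    rfl
  rw [e1, e2, ← lintegral_trim hle hg, ← lintegral_trim hle hg, hkey]

lemma integral_mul_condexp_pull (μ : Measure Ω) [IsProbabilityMeasure μ]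
    {mX : MeasurableSpace Ω} (hle : mX ≤ m0)
    {W V : Ω → ℝ} (hWm : Measurable[m0] W) (hW0 : 0 ≤ᵐ[μ] W) (hW1 : ∀ᵐ ω ∂μ, W ω ≤ 1)
    (hVm : Measurable[m0] V) (hV : μ[W|mX] =ᵐ[μ] V)
    {f : Ω → ℝ} (hf : Measurable[mX] f)
    (hint : Integrable (fun ω => W ω * f ω) μ ∨ Integrable (fun ω => V ω * f ω) μ) :
    Integrable (fun ω => W ω * f ω) μ ∧ Integrable (fun ω => V ω * f ω) μ ∧
      ∫ ω, W ω * f ω ∂μ = ∫ ω, V ω * f ω ∂μ := by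
  haveI := isFiniteMeasure_trim (μ := μ) hle
  have hfm0 : Measurable[m0] f := hf.mono hle le_rfl
  have hWi : Integrable W μ := integrable_of_bounded01 μ hWm hW0 hW1
  have hg : Measurable[mX] fun ω => ENNReal.ofReal ‖f ω‖ := hf.norm.ennreal_ofReal
  have hkey := lintegral_mul_condexp_aux μ hle hWm hW0 hW1 hg
  have hae1 : ∀ᵐ ω ∂μ, ENNReal.ofReal ‖W ω * f ω‖
      = ENNReal.ofReal (W ω) * ENNReal.ofReal ‖f ω‖ := by
    filter_upwards [hW0] with ω h0
    rw [norm_mul, Real.norm_of_nonneg h0, ENNReal.ofReal_mul h0]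
  have hae2 : ∀ᵐ ω ∂μ, ENNReal.ofReal ‖V ω * f ω‖
      = ENNReal.ofReal ((μ[W|mX]) ω) * ENNReal.ofReal ‖f ω‖ := by
    filter_upwards [hV, condExp_nonneg hW0] with ω hVe h0
    rw [norm_mul, Real.norm_of_nonneg (hVe ▸ h0), ← hVe, ENNReal.ofReal_mul h0]
  have hlin : ∫⁻ ω, ENNReal.ofReal ‖W ω * f ω‖ ∂μ = ∫⁻ ω, ENNReal.ofReal ‖V ω * f ω‖ ∂μ := by
    rw [lintegral_congr_ae hae1, lintegral_congr_ae hae2]; exact hkey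
  have hWmul : AEStronglyMeasurable[m0] (fun ω => W ω * f ω) μ :=
    (hWm.mul hfm0).aestronglyMeasurable
  have hVmul : AEStronglyMeasurable[m0] (fun ω => V ω * f ω) μ :=
    (hVm.mul hfm0).aestronglyMeasurable
  have hboth : Integrable (fun ω => W ω * f ω) μ ∧ Integrable (fun ω => V ω * f ω) μ := by
    rcases hint with h | h
    · refine ⟨h, ⟨hVmul, ?_⟩⟩
      rw [hasFiniteIntegral_iff_norm, ← hlin]
      exact (hasFiniteIntegral_iff_norm _).1 h.2
    · refine ⟨⟨hWmul, ?_⟩, h⟩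
      rw [hasFiniteIntegral_iff_norm, hlin]
      exact (hasFiniteIntegral_iff_norm _).1 h.2
  obtain ⟨hWf, hVf⟩ := hboth
  have hfW : Integrable (f * W) μ :=
    hWf.congr (Filter.Eventually.of_forall fun ω => mul_comm _ _)
  have hpull := condExp_mul_of_stronglyMeasurable_left (μ := μ) hf.stronglyMeasurable hfW hWi
  refine ⟨hWf, hVf, ?_⟩
  calc ∫ ω, W ω * f ω ∂μ
      = ∫ ω, (f * W) ω ∂μ :=
        integral_congr_ae (Filter.Eventually.of_forall fun ω => mul_comm _ _)
    _ = ∫ ω, (μ[f * W|mX]) ω ∂μ := (integral_condExp hle).symm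
    _ = ∫ ω, (f * μ[W|mX]) ω ∂μ := integral_congr_ae hpull
    _ = ∫ ω, V ω * f ω ∂μ := by
        refine integral_congr_ae ?_
        filter_upwards [hV] with ω h
        rw [Pi.mul_apply, h, mul_comm]

lemma my_integral_indicator {s : Set Ω} (μ : Measure Ω) (hs : MeasurableSet[m0] s) (f : Ω → ℝ) :
    ∫ ω, s.indicator f ω ∂μ = ∫ ω in s, f ω ∂μ := integral_indicator hs

lemma my_integrable_indicator_iff {s : Set Ω} (μ : Measure Ω) (hs : MeasurableSet[m0] s) (f : Ω → ℝ) :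
    Integrable (s.indicator f) μ ↔ Integrable f (μ.restrict s) := integrable_indicator_iff hs


lemma dr_main_aux (μ : Measure Ω) [IsProbabilityMeasure μ]
    {mX : MeasurableSpace Ω} (hle : mX ≤ m0)
    (Y Z : Ω → ℝ) (hY : Integrable Y μ)
    (hZm : Measurable[m0] Z) (hZb : ∀ ω, Z ω = 0 ∨ Z ω = 1)
    (GX : Ω → ℝ) (hGX : Measurable[mX] GX) (hGrange : ∀ᵐ ω ∂μ, GX ω < 1)
    (hGcorrect : μ[Z|mX] =ᵐ[μ] GX)
    (M : Ω → ℝ) (hMmX : Measurable[mX] M) (hMint : Integrable M μ)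
    (hwInt : Integrable (fun ω => (1 - Z ω) * GX ω / (1 - GX ω) * (Y ω - M ω)) μ)
    (hmoment : ∫ ω, (1 - Z ω) * GX ω / (1 - GX ω) * (Y ω - M ω) ∂μ = 0) :
    ∫ ω, ((μ[|{ω' | Z ω' = 0}])[Y|mX]) ω ∂μ[|{ω' | Z ω' = 1}]
      = ∫ ω, M ω ∂μ[|{ω' | Z ω' = 1}] := by
  haveI := isFiniteMeasure_trim (μ := μ) hle
  set A0 : Set Ω := {ω' | Z ω' = 0} with hA0def
  set A1 : Set Ω := {ω' | Z ω' = 1} with hA1def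
  have hA0m : MeasurableSet[m0] A0 := hZm (measurableSet_singleton 0)
  have hA1m : MeasurableSet[m0] A1 := hZm (measurableSet_singleton 1)
  have hZ0le : ∀ ω, 0 ≤ Z ω := fun ω => by rcases hZb ω with h | h <;> simp [h]
  have hZle1 : ∀ ω, Z ω ≤ 1 := fun ω => by rcases hZb ω with h | h <;> simp [h]
  -- μ A0 ≠ 0
  have hA0ne : μ A0 ≠ 0 := by
    intro h0
    have hZae : Z =ᵐ[μ] fun _ => (1 : ℝ) := by
      refine (ae_iff).2 (measure_mono_null ?_ h0)
      intro ω hω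
      rcases hZb ω with h | h
      · exact h
      · exact absurd h hω
    have h1 : GX =ᵐ[μ] fun _ => (1 : ℝ) :=
      hGcorrect.symm.trans ((condExp_congr_ae hZae).trans (by rw [condExp_const hle]))
    have hFalse : ∀ᵐ ω ∂μ, False := by
      filter_upwards [h1, hGrange] with ω hω h'
      rw [hω] at h'
      exact lt_irrefl _ h'
    rw [ae_iff] at hFalse
    simp at hFalse
  have hcinv_ne_top : (μ A0)⁻¹ ≠ ∞ := ENNReal.inv_ne_top.2 hA0ne
  have hcinv_ne_zero : (μ A0)⁻¹ ≠ 0 := ENNReal.inv_ne_zero.2 (measure_ne_top μ A0)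
  set ν := μ[|A0] with hνdef
  haveI : IsProbabilityMeasure ν := cond_isProbabilityMeasure hA0ne
  haveI := isFiniteMeasure_trim (μ := ν) hle
  have hν_eq : ν = (μ A0)⁻¹ • μ.restrict A0 := rfl
  set F : Ω → ℝ := ν[Y|mX] with hFdef
  have hFmX : Measurable[mX] F := stronglyMeasurable_condExp.measurable
  have hYν : Integrable Y ν := hY.restrict.smul_measure hcinv_ne_top
  have hMν : Integrable M ν := hMint.restrict.smul_measure hcinv_ne_top
  have hmemν : ∀ᵐ ω ∂ν, ω ∈ A0 := by
    rw [ae_iff]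
    have hc : ν A0ᶜ = 0 := by
      rw [hν_eq, Measure.smul_apply, Measure.restrict_apply hA0m.compl,
        Set.compl_inter_self, measure_empty, smul_zero]
    exact hc
  set u : Ω → ℝ := fun ω => GX ω / (1 - GX ω) * (Y ω - M ω) with hu
  have huν : Integrable u ν := by
    have h1 : Integrable (fun ω => (1 - Z ω) * GX ω / (1 - GX ω) * (Y ω - M ω)) ν :=
      hwInt.restrict.smul_measure hcinv_ne_top
    refine h1.congr ?_
    filter_upwards [hmemν] with ω hω
    have hz : Z ω = 0 := hω
    simp only [hu, hz]
    ring
  have hWind : (fun ω => (1 - Z ω) * GX ω / (1 - GX ω) * (Y ω - M ω)) = A0.indicator u := by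
    funext ω
    rcases hZb ω with h | h
    · rw [Set.indicator_of_mem (show ω ∈ A0 from h)]
      simp only [hu, h]
      ring
    · rw [Set.indicator_of_notMem (show ω ∉ A0 by simp [hA0def, h]), h]
      ring
  have hmoment' : ∫ ω, u ω ∂ν = 0 := by
    rw [hν_eq, integral_smul_measure]
    have h2 : ∫ ω, u ω ∂μ.restrict A0 = 0 := by
      rw [← my_integral_indicator μ hA0m u, ← hWind]
      exact hmoment
    rw [h2, smul_zero]
  -- conditional expectation computation under ν
  have hgmX : Measurable[mX] fun ω => GX ω / (1 - GX ω) :=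
    hGX.div (measurable_const.sub hGX)
  have hYM : Integrable (fun ω => Y ω - M ω) ν := hYν.sub hMν
  have hfgInt : Integrable ((fun ω => GX ω / (1 - GX ω)) * fun ω => Y ω - M ω) ν :=
    huν.congr (Filter.Eventually.of_forall fun ω => rfl)
  have hpull := condExp_mul_of_stronglyMeasurable_left (μ := ν) hgmX.stronglyMeasurable hfgInt hYM
  have hsub : ν[(fun ω => Y ω - M ω)|mX] =ᵐ[ν] fun ω => F ω - M ω := by
    have h1 := condExp_sub (μ := ν) (m := mX) hYν hMν
    have h2 : ν[M|mX] = M := condExp_of_stronglyMeasurable hle hMmX.stronglyMeasurable hMν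
    refine Filter.EventuallyEq.trans (by exact h1) ?_
    rw [h2]
    exact Filter.Eventually.of_forall fun ω => rfl
  set q : Ω → ℝ := fun ω => GX ω / (1 - GX ω) * (F ω - M ω) with hq
  have hcond_u : ν[((fun ω => GX ω / (1 - GX ω)) * fun ω => Y ω - M ω)|mX] =ᵐ[ν] q := by
    refine hpull.trans ?_
    filter_upwards [hsub] with ω hω
    rw [Pi.mul_apply, hω]
  have hqν : Integrable q ν := integrable_condExp.congr hcond_u
  have hq0 : ∫ ω, q ω ∂ν = 0 := by
    have h3 := integral_condExp (μ := ν) hle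
      (f := (fun ω => GX ω / (1 - GX ω)) * fun ω => Y ω - M ω)
    rw [integral_congr_ae hcond_u] at h3
    rw [h3, ← hmoment']
    exact integral_congr_ae (Filter.Eventually.of_forall fun ω => rfl)
  -- transfer to μ
  have hqA0 : Integrable q (μ.restrict A0) := by
    have h4 := hqν
    rw [hν_eq] at h4
    exact (integrable_smul_measure hcinv_ne_zero hcinv_ne_top).1 h4
  have hqint0 : ∫ ω in A0, q ω ∂μ = 0 := by
    have h1 : (0:ℝ) = ((μ A0)⁻¹).toReal • ∫ ω in A0, q ω ∂μ := by
      rw [← hq0, hν_eq, integral_smul_measure]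
    have hc : ((μ A0)⁻¹).toReal ≠ 0 :=
      ENNReal.toReal_ne_zero.2 ⟨hcinv_ne_zero, hcinv_ne_top⟩
    rcases mul_eq_zero.1 h1.symm with h | h
    · exact absurd h hc
    · exact h
  have hindq : (fun ω => (1 - Z ω) * q ω) = A0.indicator q := by
    funext ω
    rcases hZb ω with h | h
    · rw [Set.indicator_of_mem (show ω ∈ A0 from h), h]
      ring
    · rw [Set.indicator_of_notMem (show ω ∉ A0 by simp [hA0def, h]), h]
      ring
  have h1ZqInt : Integrable (fun ω => (1 - Z ω) * q ω) μ := by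
    rw [hindq]
    exact (my_integrable_indicator_iff μ hA0m q).2 hqA0
  -- pull-out no. 1 : weight (1 - Z) vs (1 - GX)
  have hZint : Integrable Z μ := by
    refine Integrable.mono' (integrable_const (1:ℝ)) hZm.aestronglyMeasurable ?_
    exact Filter.Eventually.of_forall fun ω => by
      rw [Real.norm_eq_abs, abs_le]; exact ⟨by linarith [hZ0le ω], hZle1 ω⟩
  have hW0' : (0 : Ω → ℝ) ≤ᵐ[μ] fun ω => 1 - Z ω :=
    Filter.Eventually.of_forall fun ω => by
      simp only [Pi.zero_apply]; linarith [hZle1 ω]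
  have hW1' : ∀ᵐ ω ∂μ, 1 - Z ω ≤ 1 :=
    Filter.Eventually.of_forall fun ω => by linarith [hZ0le ω]
  have hVcond : μ[(fun ω => 1 - Z ω)|mX] =ᵐ[μ] fun ω => 1 - GX ω := by
    have h1 := condExp_sub (μ := μ) (m := mX) (integrable_const (1:ℝ)) hZint
    have h2 : μ[(fun _ : Ω => (1:ℝ))|mX] = fun _ => (1:ℝ) := condExp_const hle (1:ℝ)
    refine Filter.EventuallyEq.trans (by exact h1) ?_
    filter_upwards [hGcorrect] with ω e2
    rw [Pi.sub_apply, h2, e2]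
  have hqmX : Measurable[mX] q := hgmX.mul (hFmX.sub hMmX)
  have hp1 := integral_mul_condexp_pull μ hle (W := fun ω => 1 - Z ω)
      (V := fun ω => 1 - GX ω) (measurable_const.sub hZm) hW0' hW1'
      (measurable_const.sub (hGX.mono hle le_rfl)) hVcond hqmX (Or.inl h1ZqInt)
  obtain ⟨-, hVqInt, hVqEq⟩ := hp1
  have hLHS0 : ∫ ω, (1 - Z ω) * q ω ∂μ = 0 := by
    rw [hindq, my_integral_indicator μ hA0m q]
    exact hqint0
  have hGq0 : ∫ ω, (1 - GX ω) * q ω ∂μ = 0 := by rw [← hVqEq]; exact hLHS0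
  have hsimp : ∀ᵐ ω ∂μ, (1 - GX ω) * q ω = GX ω * (F ω - M ω) := by
    filter_upwards [hGrange] with ω hω
    have hne : 1 - GX ω ≠ 0 := sub_ne_zero.2 (ne_of_gt hω)
    simp only [hq]
    field_simp
  have hGFM_int : Integrable (fun ω => GX ω * (F ω - M ω)) μ := hVqInt.congr hsimp
  have hGFM0 : ∫ ω, GX ω * (F ω - M ω) ∂μ = 0 := by
    rw [← integral_congr_ae hsimp]
    exact hGq0
  -- pull-out no. 2 : weight Z vs GX
  have hZ0ae : (0 : Ω → ℝ) ≤ᵐ[μ] Z := Filter.Eventually.of_forall fun ω => hZ0le ω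
  have hp2 := integral_mul_condexp_pull μ hle (W := Z) (V := GX) hZm hZ0ae
      (Filter.Eventually.of_forall hZle1) (hGX.mono hle le_rfl) hGcorrect
      (f := fun ω => F ω - M ω) (hFmX.sub hMmX) (Or.inr hGFM_int)
  obtain ⟨hZFM_int, -, hZFM_eq⟩ := hp2
  have hZFM0 : ∫ ω, Z ω * (F ω - M ω) ∂μ = 0 := hZFM_eq.trans hGFM0
  -- conclude on A1
  have hindZ : (fun ω => Z ω * (F ω - M ω)) = A1.indicator (fun ω => F ω - M ω) := by
    funext ω
    rcases hZb ω with h | h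
    · rw [Set.indicator_of_notMem (show ω ∉ A1 by simp [hA1def, h]), h]
      ring
    · rw [Set.indicator_of_mem (show ω ∈ A1 from h), h]
      ring
  have hFMon : Integrable (fun ω => F ω - M ω) (μ.restrict A1) := by
    rw [← my_integrable_indicator_iff μ hA1m _, ← hindZ]
    exact hZFM_int
  have hFMint0 : ∫ ω in A1, (F ω - M ω) ∂μ = 0 := by
    rw [← my_integral_indicator μ hA1m _, ← hindZ]
    exact hZFM0
  have hMon : Integrable M (μ.restrict A1) := hMint.restrict
  have hFon : Integrable F (μ.restrict A1) := by
    refine (hFMon.add hMon).congr (Filter.Eventually.of_forall fun ω => ?_)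
    show F ω - M ω + M ω = F ω
    ring
  have hfinal : ∫ ω in A1, F ω ∂μ = ∫ ω in A1, M ω ∂μ := by
    have h5 := integral_sub hFon hMon
    rw [hFMint0] at h5
    linarith [h5]
  have hcond1 : μ[|A1] = (μ A1)⁻¹ • μ.restrict A1 := rfl
  rw [hcond1, integral_smul_measure, integral_smul_measure, hfinal]

end Aux

/-- (Double robustness for the LATT control mean, propensity-score side.) If
`G(X) = P(Z=1|X)` a.s. with `P(Z=1|X) < 1` a.s. and `P(Z=1) > 0`, and the moment
condition `E{[(1-Z)G(X)/(1-G(X))](Y - m(α₀* + Xβ₀*))} = 0` holds, then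
`E[μ₀(X) | Z=1] = E[m(α₀* + Xβ₀*) | Z=1]`, regardless of whether the outcome model is
correctly specified. -/
theorem dr_propensity_correct_side_latt
    {Ω : Type*} [MeasurableSpace Ω] (μ : Measure Ω) [IsProbabilityMeasure μ] {d : ℕ}
    (Y Z : Ω → ℝ) (X : Ω → Fin d → ℝ)
    (hYm : Measurable Y) (hY : Integrable Y μ)
    (hZm : Measurable Z) (hZb : ∀ ω, Z ω = 0 ∨ Z ω = 1)
    (hX : Measurable X)
    (G : (Fin d → ℝ) → ℝ) (hG : Measurable G)
    (hGrange : ∀ᵐ ω ∂μ, G (X ω) < 1)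
    (hGcorrect : μ[Z | MeasurableSpace.comap X inferInstance]
      =ᵐ[μ] fun ω => G (X ω))
    (m : ℝ → ℝ) (hm : Measurable m) (α : ℝ) (β : Fin d → ℝ)
    (hmInt : Integrable (fun ω => m (α + ∑ i, β i * X ω i)) μ)
    (hwInt : Integrable
      (fun ω => ((1 - Z ω) * G (X ω) / (1 - G (X ω)))
        * (Y ω - m (α + ∑ i, β i * X ω i))) μ)
    (hZ1 : 0 < μ {ω | Z ω = 1})
    (hmoment : ∫ ω, ((1 - Z ω) * G (X ω) / (1 - G (X ω)))
        * (Y ω - m (α + ∑ i, β i * X ω i)) ∂μ = 0) :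
    ∫ ω, ((μ[|{ω' | Z ω' = 0}])[Y | MeasurableSpace.comap X inferInstance]) ω
        ∂μ[|{ω' | Z ω' = 1}]
      = ∫ ω, m (α + ∑ i, β i * X ω i) ∂μ[|{ω' | Z ω' = 1}] := by
  have hle : MeasurableSpace.comap X inferInstance ≤ ‹MeasurableSpace Ω› := hX.comap_le
  have hXc : Measurable[MeasurableSpace.comap X inferInstance] X :=
    Measurable.of_comap_le le_rfl
  have hmap : Measurable fun x : Fin d → ℝ => m (α + ∑ i, β i * x i) :=
    hm.comp (measurable_const.add
      (Finset.measurable_sum _ fun i _ => measurable_const.mul (measurable_pi_apply i)))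
  exact dr_main_aux μ hle Y Z hY hZm hZb (fun ω => G (X ω)) (hG.comp hXc) hGrange
    hGcorrect (fun ω => m (α + ∑ i, β i * X ω i)) (hmap.comp hXc) hmInt hwInt hmoment
end
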